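/- arXiv:2511.04602 — 6 statements merged into one kernel-verified Lean document; each statement's English description precedes it below -/
import Mathlib

section
/- Let n ≥ 3 and let λ_1 < λ_2 < ⋯ < λ_n be pairwise distinct reals, and let M be the fundamental B-spline with knots λ_1, …, λ_n. Then for every threshold t_l ∈ [λ_1, λ_2], the lower-tail probability satisfies ∫_{λ_1}^{t_l} M(u) du ≤ ((t_l − λ_1)/(λ_2 − λ_1))^{n−1}. -/
open MeasureTheory

/-- The fundamental B-spline with knots `lam 0, …, lam (n-1)`. -/
noncomputable def fundamentalBSpline (n : ℕ) (lam : Fin n → ℝ) (u : ℝ) : ℝ :=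
  ((n : ℝ) - 1) * ∑ k : Fin n,
    max (lam k - u) 0 ^ (n - 2) / ∏ i ∈ Finset.univ.erase k, (lam k - lam i)

section AuxLemmas
open Polynomial Finset

lemma basis_coeff {F : Type*} [Field F] {ι : Type*} [DecidableEq ι]
    (s : Finset ι) (v : ι → F) (i : ι) (hi : i ∈ s) :
    (Lagrange.basis s v i).coeff (#s - 1) = Lagrange.nodalWeight s v i := by
  have hb : Lagrange.basis s v i
      = C (Lagrange.nodalWeight s v i) * Lagrange.nodal (s.erase i) v := by
    unfold Lagrange.basis Lagrange.nodalWeight Lagrange.nodal Lagrange.basisDivisor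
    rw [Finset.prod_mul_distrib, map_prod]
  have hcard : #(s.erase i) = #s - 1 := Finset.card_erase_of_mem hi
  have hnd : (Lagrange.nodal (s.erase i) v).natDegree = #s - 1 := by
    rw [Lagrange.natDegree_nodal, hcard]
  rw [hb, Polynomial.coeff_C_mul, ← hnd, Polynomial.Monic.coeff_natDegree Lagrange.nodal_monic,
    mul_one]

lemma sum_eval_mul_nodalWeight {F : Type*} [Field F] {ι : Type*} [DecidableEq ι]
    (s : Finset ι) (v : ι → F) (hvs : Set.InjOn v s) (p : F[X])
    (hdeg : p.degree < (#s : ℕ)) (hcoeff : p.coeff (#s - 1) = 0) :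
    ∑ i ∈ s, p.eval (v i) * Lagrange.nodalWeight s v i = 0 := by
  have h := Lagrange.eq_interpolate hvs hdeg
  have h2 : p.coeff (#s - 1)
      = ∑ i ∈ s, p.eval (v i) * Lagrange.nodalWeight s v i := by
    conv_lhs => rw [h]
    rw [Lagrange.interpolate_apply, Polynomial.finset_sum_coeff]
    refine Finset.sum_congr rfl fun i hi => ?_
    rw [Polynomial.coeff_C_mul, basis_coeff s v i hi]
  rw [← h2, hcoeff]

/-- The key pointwise identity: the divided-difference sum of `(x-u)^(n-2)` vanishes. -/
lemma sum_pow_mul_nodalWeight_eq_zero {n : ℕ} (hn : 2 ≤ n) (lam : Fin n → ℝ)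
    (hlam : StrictMono lam) (u : ℝ) :
    ∑ k : Fin n, (lam k - u) ^ (n - 2) * Lagrange.nodalWeight Finset.univ lam k = 0 := by
  have hcard : #(Finset.univ : Finset (Fin n)) = n := Finset.card_fin n
  have hnd : ((X - C u : ℝ[X]) ^ (n - 2)).natDegree = n - 2 := by
    rw [Polynomial.natDegree_pow, Polynomial.natDegree_X_sub_C, mul_one]
  have hdeg : ((X - C u : ℝ[X]) ^ (n - 2)).degree < (#(Finset.univ : Finset (Fin n)) : ℕ) := by
    rw [hcard]
    refine lt_of_le_of_lt (Polynomial.degree_le_natDegree) ?_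
    rw [hnd]
    exact_mod_cast Nat.lt_of_lt_of_le (by omega) le_rfl
  have hcoeff : ((X - C u : ℝ[X]) ^ (n - 2)).coeff (#(Finset.univ : Finset (Fin n)) - 1) = 0 := by
    rw [hcard]
    exact Polynomial.coeff_eq_zero_of_natDegree_lt (by rw [hnd]; omega)
  have := sum_eval_mul_nodalWeight Finset.univ lam (hlam.injective.injOn) _ hdeg hcoeff
  simpa using this

theorem aux_bound (n : ℕ) (hn : 3 ≤ n) (lam : Fin n → ℝ) (hlam : StrictMono lam)
    (z o : Fin n) (hz : z.val = 0) (ho : o.val = 1)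
    (t : ℝ) (hta : lam z ≤ t) (htb : t ≤ lam o) :
    (∫ u in (lam z)..t, fundamentalBSpline n lam u)
      ≤ ((t - lam z) / (lam o - lam z)) ^ (n - 1) := by
  have hab : lam z < lam o := hlam (by rw [Fin.lt_def, hz, ho]; omega)
  have hEcard : #(Finset.univ.erase z) = n - 1 := by
    rw [Finset.card_erase_of_mem (Finset.mem_univ z), Finset.card_fin]
  have hkey : ∀ k : Fin n, k ≠ z → lam o ≤ lam k := by
    intro k hk
    refine hlam.monotone ?_
    rw [Fin.le_def, ho]
    have : k.val ≠ 0 := fun h => hk (Fin.ext (by omega))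
    omega
  set w0 := Lagrange.nodalWeight Finset.univ lam z with hw0
  have hM : Set.EqOn (fun u => fundamentalBSpline n lam u)
      (fun u => (((n : ℝ) - 1) * -w0) * (lam z - u) ^ (n - 2)) (Set.uIcc (lam z) t) := by
    intro u hu
    rw [Set.uIcc_of_le hta] at hu
    obtain ⟨hau, hut⟩ := hu
    simp only [fundamentalBSpline]
    have hzmax : max (lam z - u) 0 = 0 := max_eq_right (by linarith)
    have hsplit : ∑ k : Fin n, max (lam k - u) 0 ^ (n - 2) / ∏ i ∈ Finset.univ.erase k, (lam k - lam i)
        = ∑ k ∈ Finset.univ.erase z, (lam k - u) ^ (n - 2) * Lagrange.nodalWeight Finset.univ lam k := by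
      rw [← Finset.add_sum_erase _ _ (Finset.mem_univ z), hzmax,
        zero_pow (by omega : n - 2 ≠ 0), zero_div, zero_add]
      refine Finset.sum_congr rfl fun k hk => ?_
      have hk' : k ≠ z := Finset.ne_of_mem_erase hk
      have hmax : max (lam k - u) 0 = lam k - u := by
        have := hkey k hk'; exact max_eq_left (by linarith)
      rw [hmax, div_eq_mul_inv, ← Finset.prod_inv_distrib, Lagrange.nodalWeight]
    have hz0 := sum_pow_mul_nodalWeight_eq_zero (by omega) lam hlam u
    rw [← Finset.add_sum_erase _ _ (Finset.mem_univ z)] at hz0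
    have hE : ∑ k ∈ Finset.univ.erase z, (lam k - u) ^ (n - 2) * Lagrange.nodalWeight Finset.univ lam k
        = -((lam z - u) ^ (n - 2) * w0) := by rw [hw0]; linarith
    simp only [hsplit, hE]
    ring
  have hne : (n : ℝ) - 1 ≠ 0 := by
    have : (3 : ℝ) ≤ (n : ℝ) := by exact_mod_cast hn
    linarith
  have hint : (∫ u in (lam z)..t, fundamentalBSpline n lam u) = w0 * (lam z - t) ^ (n - 1) := by
    rw [intervalIntegral.integral_congr hM, intervalIntegral.integral_const_mul,
      show (∫ u in (lam z)..t, (lam z - u) ^ (n - 2))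
          = ∫ x in (lam z - t)..(lam z - lam z), x ^ (n - 2) from
        intervalIntegral.integral_comp_sub_left (fun x => x ^ (n - 2)) (lam z),
      integral_pow, show n - 2 + 1 = n - 1 from by omega,
      sub_self, zero_pow (by omega : n - 1 ≠ 0)]
    have hcast : ((n - 2 : ℕ) : ℝ) + 1 = (n : ℝ) - 1 := by
      rw [Nat.cast_sub (by omega)]; push_cast; ring
    rw [hcast]
    field_simp
    ring
  rw [hint]
  -- rewrite w0 * (a-t)^(n-1) as (t-a)^(n-1) / ∏ (lam j - a)
  have hw0eq : w0 = (-1 : ℝ) ^ (n - 1) * ∏ j ∈ Finset.univ.erase z, (lam j - lam z)⁻¹ := by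
    rw [hw0, Lagrange.nodalWeight]
    rw [Finset.prod_congr rfl (fun j _ => show (lam z - lam j)⁻¹ = (-1) * (lam j - lam z)⁻¹ by
      rw [show lam z - lam j = -(lam j - lam z) by ring, inv_neg]; ring)]
    rw [Finset.prod_mul_distrib, Finset.prod_const, hEcard]
  have hpow : (lam z - t) ^ (n - 1) = (-1 : ℝ) ^ (n - 1) * (t - lam z) ^ (n - 1) := by
    rw [show lam z - t = -(t - lam z) by ring, neg_pow]
  have hsign : ((-1 : ℝ) ^ (n - 1)) * ((-1 : ℝ) ^ (n - 1)) = 1 := by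
    rw [← pow_add]
    exact Even.neg_one_pow ⟨n - 1, by ring⟩
  have hmain : w0 * (lam z - t) ^ (n - 1)
      = (t - lam z) ^ (n - 1) / ∏ j ∈ Finset.univ.erase z, (lam j - lam z) := by
    rw [hw0eq, hpow, div_eq_mul_inv, ← Finset.prod_inv_distrib]
    calc (-1 : ℝ) ^ (n - 1) * (∏ j ∈ Finset.univ.erase z, (lam j - lam z)⁻¹)
          * ((-1 : ℝ) ^ (n - 1) * (t - lam z) ^ (n - 1))
        = (((-1 : ℝ) ^ (n - 1)) * ((-1 : ℝ) ^ (n - 1))) *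
            ((t - lam z) ^ (n - 1) * ∏ j ∈ Finset.univ.erase z, (lam j - lam z)⁻¹) := by ring
      _ = (t - lam z) ^ (n - 1) * ∏ j ∈ Finset.univ.erase z, (lam j - lam z)⁻¹ := by
          rw [hsign, one_mul]
  rw [hmain, div_pow]
  have hba : (0 : ℝ) < lam o - lam z := by linarith
  have hprod_ge : (lam o - lam z) ^ (n - 1) ≤ ∏ j ∈ Finset.univ.erase z, (lam j - lam z) := by
    calc (lam o - lam z) ^ (n - 1) = ∏ _j ∈ Finset.univ.erase z, (lam o - lam z) := by
          rw [Finset.prod_const, hEcard]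
      _ ≤ ∏ j ∈ Finset.univ.erase z, (lam j - lam z) := by
          refine Finset.prod_le_prod (fun j _ => le_of_lt hba) (fun j hj => ?_)
          have := hkey j (Finset.ne_of_mem_erase hj); linarith
  gcongr

end AuxLemmas

/-- Lower-tail probability bound: for every threshold `t_l ∈ [λ_1, λ_2]`,
`∫_{λ_1}^{t_l} M(u) du ≤ ((t_l − λ_1)/(λ_2 − λ_1))^{n−1}`. -/
theorem fundamentalBSpline_lower_tail_probability_bound
    (n : ℕ) (hn : 3 ≤ n) (lam : Fin n → ℝ) (hlam : StrictMono lam) :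
    ∀ t_l ∈ Set.Icc (lam ⟨0, by omega⟩) (lam ⟨1, by omega⟩),
      (∫ u in (lam ⟨0, by omega⟩)..t_l, fundamentalBSpline n lam u)
        ≤ ((t_l - lam ⟨0, by omega⟩) / (lam ⟨1, by omega⟩ - lam ⟨0, by omega⟩)) ^ (n - 1) := by
  intro t_l ht
  exact aux_bound n hn lam hlam _ _ rfl rfl t_l ht.1 ht.2
end

section
/- Let n ≥ 3 and let λ_1 < λ_2 < ⋯ < λ_n be pairwise distinct reals, and let M be the fundamental B-spline with knots λ_1, …, λ_n. Then for every threshold t_h ∈ [λ_{n−1}, λ_n], the upper-tail probability satisfies ∫_{t_h}^{λ_n} M(u) du ≤ ((λ_n − t_h)/(λ_n − λ_{n−1}))^{n−1}. -/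
open MeasureTheory

/-- Upper-tail probability bound: for every threshold `t_h ∈ [λ_{n−1}, λ_n]`,
`∫_{t_h}^{λ_n} M(u) du ≤ ((λ_n − t_h)/(λ_n − λ_{n−1}))^{n−1}`. -/
theorem fundamentalBSpline_upper_tail_probability_bound
    (n : ℕ) (hn : 3 ≤ n) (lam : Fin n → ℝ) (hlam : StrictMono lam) :
    ∀ t_h ∈ Set.Icc (lam ⟨n - 2, by omega⟩) (lam ⟨n - 1, by omega⟩),
      (∫ u in t_h..(lam ⟨n - 1, by omega⟩), fundamentalBSpline n lam u)
        ≤ ((lam ⟨n - 1, by omega⟩ - t_h) /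
            (lam ⟨n - 1, by omega⟩ - lam ⟨n - 2, by omega⟩)) ^ (n - 1) := by
  intro t_h ht
  obtain ⟨ht1, ht2⟩ := ht
  set a : ℝ := lam ⟨n - 2, by omega⟩ with ha
  set b : ℝ := lam ⟨n - 1, by omega⟩ with hb
  have hab : a < b := hlam (by simp [Fin.lt_def]; omega)
  set S := Finset.univ.erase (⟨n - 1, by omega⟩ : Fin n) with hS
  set P : ℝ := ∏ i ∈ S, (b - lam i) with hP
  have hfac : ∀ i ∈ S, b - a ≤ b - lam i := by
    intro i hi
    have h1 : i.val ≠ n - 1 := by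
      have := Finset.ne_of_mem_erase hi
      simpa [Fin.ext_iff] using this
    have h2 : i.val ≤ n - 2 := by have := i.isLt; omega
    have h3 : lam i ≤ a := hlam.monotone (by simp [Fin.le_def]; omega)
    linarith
  have hcard : S.card = n - 1 := by
    rw [hS, Finset.card_erase_of_mem (Finset.mem_univ _), Finset.card_univ,
      Fintype.card_fin]
  have hPge : (b - a) ^ (n - 1) ≤ P := by
    calc (b - a) ^ (n - 1) = ∏ _i ∈ S, (b - a) := by
          rw [Finset.prod_const, hcard]
      _ ≤ P := Finset.prod_le_prod (fun i _ => by linarith) hfac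
  have hPpos : 0 < P := lt_of_lt_of_le (pow_pos (by linarith) _) hPge
  have hcongr : (∫ u in t_h..b, fundamentalBSpline n lam u)
      = ∫ u in t_h..b, ((n : ℝ) - 1) * (b - u) ^ (n - 2) / P := by
    apply intervalIntegral.integral_congr
    intro u hu
    rw [Set.uIcc_of_le (by linarith)] at hu
    obtain ⟨hu1, hu2⟩ := hu
    unfold fundamentalBSpline
    rw [Finset.sum_eq_single (⟨n - 1, by omega⟩ : Fin n)]
    · rw [max_eq_left (by linarith)]
      exact (mul_div_assoc _ _ _).symm
    · intro k _ hk
      have hk2 : k.val ≤ n - 2 := by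
        have := k.isLt; simp [Fin.ext_iff] at hk; omega
      have h3 : lam k ≤ a := hlam.monotone (by simp [Fin.le_def]; omega)
      have hm : max (lam k - u) 0 = 0 := max_eq_right (by linarith)
      rw [hm, zero_pow (by omega), zero_div]
    · intro h; exact absurd (Finset.mem_univ _) h
  have hint : (∫ u in t_h..b, ((n : ℝ) - 1) * (b - u) ^ (n - 2) / P)
      = (b - t_h) ^ (n - 1) / P := by
    have h1 : (∫ u in t_h..b, (b - u) ^ (n - 2))
        = (b - t_h) ^ (n - 1) / ((n : ℝ) - 1) := by
      rw [intervalIntegral.integral_comp_sub_left (fun x => x ^ (n - 2)) b]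
      rw [sub_self, integral_pow]
      have he : n - 2 + 1 = n - 1 := by omega
      rw [he, zero_pow (by omega), sub_zero]
      congr 1
      push_cast [Nat.cast_sub (by omega : 2 ≤ n)]
      ring
    have hne : ((n : ℝ) - 1) ≠ 0 := by
      have : (3 : ℝ) ≤ (n : ℝ) := by exact_mod_cast hn
      linarith
    calc (∫ u in t_h..b, ((n : ℝ) - 1) * (b - u) ^ (n - 2) / P)
        = (((n : ℝ) - 1) / P) * ∫ u in t_h..b, (b - u) ^ (n - 2) := by
          rw [← intervalIntegral.integral_const_mul]
          apply intervalIntegral.integral_congr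
          intro u _; ring
      _ = (b - t_h) ^ (n - 1) / P := by rw [h1]; field_simp
  rw [hcongr, hint, div_pow]
  gcongr
end

section
/- Let n ≥ 3 and let λ_1 < λ_2 < ⋯ < λ_n be pairwise distinct reals, let M be the fundamental B-spline with knots λ_1, …, λ_n, and let μ = (1/n) Σ_{i=1}^{n} λ_i. Then the variance of the distribution with density M satisfies ∫_{-∞}^{∞} (t − μ)² · M(t) dt = (1/((n+1)·n²)) · Σ_{1 ≤ j < i ≤ n} (λ_i − λ_j)². -/
open MeasureTheory

section Aux
open Polynomial Finset

lemma sum_Ioi_swap (N : ℕ) (g : Fin N → Fin N → ℝ) :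
    ∑ i, ∑ j ∈ Finset.Ioi i, g i j = ∑ i, ∑ j ∈ Finset.Iio i, g j i := by
  rw [Finset.sum_sigma', Finset.sum_sigma']
  refine Finset.sum_nbij' (fun p => ⟨p.2, p.1⟩) (fun p => ⟨p.2, p.1⟩) ?_ ?_ ?_ ?_ ?_ <;>
    simp [Finset.mem_sigma]

lemma sum_sum_Iio_eq (N : ℕ) (g : Fin N → Fin N → ℝ) (hg : ∀ i j, g i j = g j i) :
    ∑ i, ∑ j, g i j = (∑ i, g i i) + 2 * ∑ i, ∑ j ∈ Finset.Iio i, g i j := by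
  have h1 : ∀ i : Fin N, ∑ j, g i j
      = g i i + (∑ j ∈ Finset.Ioi i, g i j + ∑ j ∈ Finset.Iio i, g i j) := by
    intro i
    rw [← Finset.sum_disjUnion, Finset.Ioi_disjUnion_Iio]
    rw [← Finset.sum_compl_add_sum {i} (f := g i), Finset.sum_singleton, add_comm]
    congr! 2
    · exact Finset.disjoint_left.mpr fun x h1 h2 =>
        lt_asymm (Finset.mem_Ioi.mp h1) (Finset.mem_Iio.mp h2)
  simp_rw [h1, Finset.sum_add_distrib]
  rw [sum_Ioi_swap]
  have : ∀ i, ∑ j ∈ Finset.Iio i, g j i = ∑ j ∈ Finset.Iio i, g i j := by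
    intro i; exact Finset.sum_congr rfl fun j _ => hg j i
  simp_rw [this]; ring


lemma sum_powersetCard_two (N : ℕ) (v : Fin N → ℝ) :
    ∑ t ∈ Finset.powersetCard 2 (Finset.univ : Finset (Fin N)), ∏ i ∈ t, v i
      = ∑ i, ∑ j ∈ Finset.Iio i, v i * v j := by
  rw [Finset.sum_sigma']
  refine (Finset.sum_bij (fun p _ => ({p.1, p.2} : Finset (Fin N))) ?_ ?_ ?_ ?_).symm
  · rintro ⟨i, j⟩ hp
    simp only [Finset.mem_sigma, Finset.mem_univ, Finset.mem_Iio, true_and] at hp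
    simp only [Finset.mem_powersetCard]
    exact ⟨Finset.subset_univ _, Finset.card_pair (ne_of_gt hp)⟩
  · rintro ⟨i, j⟩ hp ⟨i', j'⟩ hp' h
    simp only [Finset.mem_sigma, Finset.mem_univ, Finset.mem_Iio, true_and] at hp hp'
    simp only at h
    have hi : i = i' := by
      have h1 : i ∈ ({i', j'} : Finset (Fin N)) := h ▸ (by simp)
      have h2 : i' ∈ ({i, j} : Finset (Fin N)) := h ▸ (by simp)
      simp only [Finset.mem_insert, Finset.mem_singleton] at h1 h2
      rcases h1 with h1 | h1 <;> rcases h2 with h2 | h2 <;> first | exact h1 | omega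
    subst hi
    have hj : j = j' := by
      have h1 : j ∈ ({i, j'} : Finset (Fin N)) := h ▸ (by simp)
      simp only [Finset.mem_insert, Finset.mem_singleton] at h1
      rcases h1 with h1 | h1
      · omega
      · exact h1
    subst hj; rfl
  · intro t ht
    simp only [Finset.mem_powersetCard] at ht
    obtain ⟨x, y, hxy, rfl⟩ := Finset.card_eq_two.mp ht.2
    rcases hxy.lt_or_gt with h | h
    · exact ⟨⟨y, x⟩, by simp [Finset.mem_sigma, h], by rw [Finset.pair_comm]⟩
    · exact ⟨⟨x, y⟩, by simp [Finset.mem_sigma, h], rfl⟩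
  · rintro ⟨i, j⟩ hp
    simp only [Finset.mem_sigma, Finset.mem_univ, Finset.mem_Iio, true_and] at hp
    rw [Finset.prod_pair (ne_of_gt hp)]


lemma lagrange_coeff_sum (N : ℕ) (v : Fin N → ℝ) (hv : Function.Injective v)
    (p : Polynomial ℝ) (hp : p.degree < N) :
    ∑ k, p.eval (v k) / ∏ i ∈ Finset.univ.erase k, (v k - v i) = p.coeff (N - 1) := by
  have hvs : Set.InjOn v (Finset.univ : Finset (Fin N)) := hv.injOn
  have hp' : p.degree < (#(Finset.univ : Finset (Fin N)) : ℕ) := by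
    simpa using hp
  have h := Lagrange.eq_interpolate hvs hp'
  have hb : ∀ k : Fin N, (Lagrange.basis Finset.univ v k).coeff (N - 1)
      = (∏ i ∈ Finset.univ.erase k, (v k - v i))⁻¹ := by
    intro k
    unfold Lagrange.basis Lagrange.basisDivisor
    rw [Finset.prod_mul_distrib, ← map_prod]
    rw [Polynomial.coeff_C_mul]
    have hmon : (∏ j ∈ Finset.univ.erase k, (X - C (v j))).Monic :=
      Polynomial.monic_prod_of_monic _ _ fun i _ => Polynomial.monic_X_sub_C _
    have hdeg : (∏ j ∈ Finset.univ.erase k, (X - C (v j))).natDegree = N - 1 := by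
      rw [Polynomial.natDegree_prod_of_monic _ _ fun i _ => Polynomial.monic_X_sub_C _]
      simp [Polynomial.natDegree_X_sub_C, Finset.card_erase_of_mem]
    rw [← hdeg, hmon.coeff_natDegree, mul_one, ← Finset.prod_inv_distrib]
  calc ∑ k, p.eval (v k) / ∏ i ∈ Finset.univ.erase k, (v k - v i)
      = (Lagrange.interpolate Finset.univ v fun i => p.eval (v i)).coeff (N - 1) := by
        rw [Lagrange.interpolate_apply, Polynomial.finset_sum_coeff]
        refine Finset.sum_congr rfl fun k _ => ?_
        rw [Polynomial.coeff_C_mul, hb k, div_eq_mul_inv]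
    _ = p.coeff (N - 1) := by rw [← h]


lemma coeff_prod_sub_two {ι : Type*} (s : Finset ι) (f : ι → ℝ) (hs : 2 ≤ #s) :
    (∏ i ∈ s, (X - C (f i))).coeff (#s - 2)
      = ∑ t ∈ s.powersetCard 2, ∏ i ∈ t, f i := by
  have h1 : (∏ i ∈ s, (X - C (f i))) = ∏ i ∈ s, (X + C (-(f i))) := by
    refine Finset.prod_congr rfl fun i _ => by rw [map_neg, sub_eq_add_neg]
  rw [h1, Finset.prod_X_add_C_coeff _ _ (by omega)]
  have h2 : #s - (#s - 2) = 2 := by omega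
  rw [h2]
  refine Finset.sum_congr rfl fun t ht => ?_
  have hct : #t = 2 := (Finset.mem_powersetCard.mp ht).2
  calc ∏ i ∈ t, -f i = (-1) ^ #t * ∏ i ∈ t, f i := by
        rw [← Finset.prod_const, ← Finset.prod_mul_distrib]
        exact Finset.prod_congr rfl fun i _ => by ring
    _ = ∏ i ∈ t, f i := by rw [hct]; norm_num


section Svals

variable {m : ℕ} (v : Fin (m + 3) → ℝ) (a : ℝ)

private noncomputable def Wpoly : ℝ[X] := ∏ i : Fin (m + 3), (X - C (v i))

lemma Wpoly_monic : (Wpoly v).Monic :=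
  Polynomial.monic_prod_of_monic _ _ fun i _ => Polynomial.monic_X_sub_C _

lemma Wpoly_natDegree : (Wpoly v).natDegree = m + 3 := by
  rw [Wpoly, Polynomial.natDegree_prod_of_monic _ _ fun i _ => Polynomial.monic_X_sub_C _]
  simp [Polynomial.natDegree_X_sub_C]

lemma Wpoly_coeff_top : (Wpoly v).coeff (m + 3) = 1 := by
  have := (Wpoly_monic v).coeff_natDegree
  rwa [Wpoly_natDegree] at this

lemma Wpoly_coeff_one : (Wpoly v).coeff (m + 2) = -∑ k, v k := by
  have h := Polynomial.prod_X_sub_C_coeff_card_pred (Finset.univ : Finset (Fin (m + 3))) v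
    (by simp)
  simpa [Wpoly] using h

lemma Wpoly_coeff_two :
    (Wpoly v).coeff (m + 1) = ∑ i, ∑ j ∈ Finset.Iio i, v i * v j := by
  have h := coeff_prod_sub_two (Finset.univ : Finset (Fin (m + 3))) v (by simp)
  rw [show #(Finset.univ : Finset (Fin (m+3))) = m + 3 by simp] at h
  rw [show m + 3 - 2 = m + 1 by omega] at h
  rw [Wpoly, h, sum_powersetCard_two]

lemma Wpoly_eval (k : Fin (m + 3)) : (Wpoly v).eval (v k) = 0 := by
  rw [Wpoly, Polynomial.eval_prod]
  exact Finset.prod_eq_zero (Finset.mem_univ k) (by simp)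

lemma pow_sub_eq_prod (M : ℕ) : ((X : ℝ[X]) - C a) ^ M = ∏ _i ∈ Finset.range M, (X - C a) := by
  rw [Finset.prod_const, Finset.card_range]

lemma pow_coeff_one (M : ℕ) (hM : 0 < M) :
    (((X : ℝ[X]) - C a) ^ M).coeff (M - 1) = -(M * a) := by
  rw [pow_sub_eq_prod]
  have h := Polynomial.prod_X_sub_C_coeff_card_pred (Finset.range M) (fun _ => a) (by simpa)
  simpa using h

lemma pow_coeff_two (M : ℕ) (hM : 2 ≤ M) :
    (((X : ℝ[X]) - C a) ^ M).coeff (M - 2) = (M.choose 2 : ℝ) * a ^ 2 := by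
  rw [pow_sub_eq_prod]
  have h := coeff_prod_sub_two (Finset.range M) (fun _ => a) (by simpa)
  rw [Finset.card_range] at h
  rw [h]
  have : ∀ t ∈ (Finset.range M).powersetCard 2, ∏ _i ∈ t, a = a ^ 2 := by
    intro t ht
    rw [Finset.prod_const, (Finset.mem_powersetCard.mp ht).2]
  rw [Finset.sum_congr rfl this, Finset.sum_const, Finset.card_powersetCard, Finset.card_range,
    nsmul_eq_mul]

lemma degree_lt_cast {p : Polynomial ℝ} {M : ℕ} (hd : p.natDegree < M) :
    p.degree < (M : ℕ) :=
  lt_of_le_of_lt Polynomial.degree_le_natDegree (by exact_mod_cast hd)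

lemma natDegree_pow_X_sub_C (M : ℕ) : (((X : ℝ[X]) - C a) ^ M).natDegree = M := by
  rw [Polynomial.natDegree_pow, Polynomial.natDegree_X_sub_C, mul_one]

lemma Sval_zero (hv : Function.Injective v) (t : ℝ) :
    ∑ k, (v k - t) ^ (m + 1) / ∏ i ∈ Finset.univ.erase k, (v k - v i) = 0 := by
  have h := lagrange_coeff_sum (m + 3) v hv (((X : ℝ[X]) - C t) ^ (m + 1))
    (degree_lt_cast (by rw [natDegree_pow_X_sub_C]; omega))
  rw [show m + 3 - 1 = m + 2 by omega] at h
  rw [Polynomial.coeff_eq_zero_of_natDegree_lt (by rw [natDegree_pow_X_sub_C]; omega)] at h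
  rw [← h]
  exact Finset.sum_congr rfl fun k _ => by simp

lemma Sval_one (hv : Function.Injective v) :
    ∑ k, (v k - a) ^ (m + 2) / ∏ i ∈ Finset.univ.erase k, (v k - v i) = 1 := by
  have h := lagrange_coeff_sum (m + 3) v hv (((X : ℝ[X]) - C a) ^ (m + 2))
    (degree_lt_cast (by rw [natDegree_pow_X_sub_C]; omega))
  rw [show m + 3 - 1 = m + 2 by omega] at h
  have hc : (((X : ℝ[X]) - C a) ^ (m + 2)).coeff (m + 2) = 1 := by
    have h2 := ((Polynomial.monic_X_sub_C a).pow (m + 2)).coeff_natDegree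
    rwa [natDegree_pow_X_sub_C] at h2
  rw [hc] at h
  rw [← h]
  exact Finset.sum_congr rfl fun k _ => by simp

lemma Sval_two (hv : Function.Injective v) :
    ∑ k, (v k - a) ^ (m + 3) / ∏ i ∈ Finset.univ.erase k, (v k - v i)
      = (∑ k, v k) - (m + 3) * a := by
  set p : ℝ[X] := ((X : ℝ[X]) - C a) ^ (m + 3) - Wpoly v with hp
  have hdeg : p.degree < ((m + 3 : ℕ) : WithBot ℕ) := by
    refine lt_of_lt_of_le (Polynomial.degree_sub_lt ?_ ?_ ?_) ?_
    · rw [Polynomial.degree_eq_natDegree (((Polynomial.monic_X_sub_C a).pow (m+3)).ne_zero),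
        Polynomial.degree_eq_natDegree (Wpoly_monic v).ne_zero,
        natDegree_pow_X_sub_C, Wpoly_natDegree]
    · exact ((Polynomial.monic_X_sub_C a).pow (m+3)).ne_zero
    · rw [((Polynomial.monic_X_sub_C a).pow (m+3)).leadingCoeff, (Wpoly_monic v).leadingCoeff]
    · rw [Polynomial.degree_eq_natDegree (((Polynomial.monic_X_sub_C a).pow (m+3)).ne_zero),
        natDegree_pow_X_sub_C]
  have h := lagrange_coeff_sum (m + 3) v hv p hdeg
  rw [show m + 3 - 1 = m + 2 by omega] at h
  have hc : p.coeff (m + 2) = -(((m : ℝ) + 3) * a) + ∑ k, v k := by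
    rw [hp, Polynomial.coeff_sub, Wpoly_coeff_one]
    have h1 := pow_coeff_one a (m + 3) (by omega)
    rw [show m + 3 - 1 = m + 2 by omega] at h1
    rw [h1]; push_cast; ring
  rw [hc] at h
  have heval : ∀ k, p.eval (v k) = (v k - a) ^ (m + 3) := by
    intro k; rw [hp]; simp [Wpoly_eval]
  rw [← Finset.sum_congr rfl fun k _ => by rw [heval k]] at h
  rw [h]; ring

lemma Sval_three (hv : Function.Injective v) :
    ∑ k, (v k - a) ^ (m + 4) / ∏ i ∈ Finset.univ.erase k, (v k - v i)
      = (((m + 4).choose 2 : ℕ) : ℝ) * a ^ 2 - (∑ i, ∑ j ∈ Finset.Iio i, v i * v j)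
        + ((∑ k, v k) - ((m : ℝ) + 4) * a) * (∑ k, v k) := by
  set e : ℝ := (∑ k, v k) - ((m : ℝ) + 4) * a with he
  set p : ℝ[X] := ((X : ℝ[X]) - C a) ^ (m + 4) - (X + C e) * Wpoly v with hp
  have hqnd : ((X + C e) * Wpoly v).natDegree = m + 4 := by
    rw [(Polynomial.monic_X_add_C e).natDegree_mul (Wpoly_monic v),
      Polynomial.natDegree_X_add_C, Wpoly_natDegree]
    omega
  have hq3 : ((X + C e) * Wpoly v).coeff (m + 3) = -(((m : ℝ) + 4) * a) := by
    rw [add_mul, Polynomial.coeff_add, Polynomial.coeff_C_mul,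
      show m + 3 = (m + 2) + 1 by omega, Polynomial.coeff_X_mul,
      show (m + 2) + 1 = m + 3 by omega, Wpoly_coeff_one, Wpoly_coeff_top, he]
    ring
  have hq4 : ((X + C e) * Wpoly v).coeff (m + 4) = 1 := by
    rw [add_mul, Polynomial.coeff_add, Polynomial.coeff_C_mul,
      show m + 4 = (m + 3) + 1 by omega, Polynomial.coeff_X_mul, Wpoly_coeff_top,
      Polynomial.coeff_eq_zero_of_natDegree_lt (by rw [Wpoly_natDegree]; omega)]
    ring
  have hq2 : ((X + C e) * Wpoly v).coeff (m + 2)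
      = (∑ i, ∑ j ∈ Finset.Iio i, v i * v j) + e * (-∑ k, v k) := by
    rw [add_mul, Polynomial.coeff_add, Polynomial.coeff_C_mul,
      show m + 2 = (m + 1) + 1 by omega, Polynomial.coeff_X_mul, Wpoly_coeff_two,
      show (m + 1) + 1 = m + 2 by omega, Wpoly_coeff_one]
  have hdeg : p.degree < ((m + 3 : ℕ) : WithBot ℕ) := by
    rw [Polynomial.degree_lt_iff_coeff_zero]
    intro j hj
    have hj' : m + 3 ≤ j := by exact_mod_cast hj
    rw [hp, Polynomial.coeff_sub]
    rcases (show j = m + 3 ∨ j = m + 4 ∨ m + 5 ≤ j by omega) with rfl | rfl | h5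
    · rw [hq3]
      have h1 := pow_coeff_one a (m + 4) (by omega)
      rw [show m + 4 - 1 = m + 3 by omega] at h1
      rw [h1]; push_cast; ring
    · rw [hq4]
      have h1 := ((Polynomial.monic_X_sub_C a).pow (m+4)).coeff_natDegree
      rw [natDegree_pow_X_sub_C] at h1
      rw [h1]; ring
    · rw [Polynomial.coeff_eq_zero_of_natDegree_lt (by rw [natDegree_pow_X_sub_C]; omega),
        Polynomial.coeff_eq_zero_of_natDegree_lt (by rw [hqnd]; omega)]
      ring
  have h := lagrange_coeff_sum (m + 3) v hv p hdeg
  rw [show m + 3 - 1 = m + 2 by omega] at h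
  have hc : p.coeff (m + 2) = (((m + 4).choose 2 : ℕ) : ℝ) * a ^ 2
      - ((∑ i, ∑ j ∈ Finset.Iio i, v i * v j) + e * (-∑ k, v k)) := by
    rw [hp, Polynomial.coeff_sub, hq2]
    have h1 := pow_coeff_two a (m + 4) (by omega)
    rw [show m + 4 - 2 = m + 2 by omega] at h1
    rw [h1]
  rw [hc] at h
  have heval : ∀ k, p.eval (v k) = (v k - a) ^ (m + 4) := by
    intro k; rw [hp]; simp [Wpoly_eval]
  rw [← Finset.sum_congr rfl fun k _ => by rw [heval k]] at h
  rw [h, he]; ring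

end Svals

end Aux

/-- The variance of the distribution with density the fundamental B-spline equals the
variance of the knots divided by `n + 1`:
`∫ (t − μ)² M(t) dt = (1/((n+1)n²)) Σ_{j<i} (λ_i − λ_j)²`, where `μ = (1/n) Σ_i λ_i`. -/
theorem fundamentalBSpline_variance
    (n : ℕ) (hn : 3 ≤ n) (lam : Fin n → ℝ) (hlam : StrictMono lam)
    (μ : ℝ) (hμ : μ = (1 / (n : ℝ)) * ∑ i : Fin n, lam i) :
    (∫ t : ℝ, (t - μ) ^ 2 * fundamentalBSpline n lam t)
      = (1 / (((n : ℝ) + 1) * (n : ℝ) ^ 2)) *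
          ∑ i : Fin n, ∑ j ∈ Finset.Iio i, (lam i - lam j) ^ 2 := by

  obtain ⟨m, rfl⟩ : ∃ m, n = m + 3 := ⟨n - 3, by omega⟩
  clear hn
  have hinj := hlam.injective
  set a : ℝ := lam ⟨0, by omega⟩ with ha
  set b : ℝ := lam ⟨m + 2, by omega⟩ with hb
  have hla : ∀ k, a ≤ lam k := fun k => hlam.monotone (by simp [Fin.le_def])
  have hlb : ∀ k, lam k ≤ b := fun k => hlam.monotone (by simp [Fin.le_def]; omega)
  have hab : a ≤ b := hla _
  set P : Fin (m + 3) → ℝ := fun k => ∏ i ∈ Finset.univ.erase k, (lam k - lam i) with hP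
  -- the integrand as a finite sum
  set g : Fin (m + 3) → ℝ → ℝ :=
    fun k t => (((m : ℝ) + 2) / P k) * ((t - μ) ^ 2 * max (lam k - t) 0 ^ (m + 1)) with hg
  have hfg : ∀ t, (t - μ) ^ 2 * fundamentalBSpline (m + 3) lam t = ∑ k, g k t := by
    intro t
    rw [fundamentalBSpline, hg]
    rw [show (m + 3) - 2 = m + 1 by omega]
    push_cast
    rw [Finset.mul_sum, Finset.mul_sum]
    exact Finset.sum_congr rfl fun k _ => by rw [hP]; ring
  have hgc : ∀ k, Continuous (g k) := by
    intro k
    apply Continuous.mul continuous_const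
    exact ((continuous_id.sub continuous_const).pow 2).mul
      (((continuous_const.sub continuous_id).max continuous_const).pow (m + 1))
  -- support
  have hsupp : Function.support (fun t => (t - μ) ^ 2 * fundamentalBSpline (m + 3) lam t)
      ⊆ Set.Ioc a b := by
    intro t ht
    simp only [Function.mem_support] at ht
    by_contra hcon
    apply ht
    rw [hfg]
    have hta : t ≤ a ∨ b < t := by
      rw [Set.mem_Ioc] at hcon
      push_neg at hcon
      rcases le_or_gt t a with h | h
      · exact Or.inl h
      · exact Or.inr (hcon h)
    rcases hta with h | h
    · have hmax : ∀ k, max (lam k - t) 0 = lam k - t := fun k =>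
        max_eq_left (by linarith [hla k])
      have h0 := Sval_zero lam hinj t
      rw [hg]
      simp only [hmax]
      calc ∑ k, (((m : ℝ) + 2) / P k) * ((t - μ) ^ 2 * (lam k - t) ^ (m + 1))
          = ((m : ℝ) + 2) * (t - μ) ^ 2
            * ∑ k, (lam k - t) ^ (m + 1) / P k := by
            rw [Finset.mul_sum]; exact Finset.sum_congr rfl fun k _ => by ring
        _ = 0 := by rw [hP] at *; rw [h0]; ring
    · have hmax : ∀ k, max (lam k - t) 0 = 0 := fun k =>
        max_eq_right (by linarith [hlb k])
      rw [hg]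
      simp [hmax]
  rw [← intervalIntegral.integral_eq_integral_of_support_subset hsupp]
  -- split into sum
  have hieq : ∀ t ∈ Set.uIcc a b, (t - μ) ^ 2 * fundamentalBSpline (m + 3) lam t = ∑ k, g k t :=
    fun t _ => hfg t
  rw [intervalIntegral.integral_congr hieq]
  rw [intervalIntegral.integral_finset_sum (fun k _ => (hgc k).intervalIntegrable a b)]
  -- compute each integral
  have hval : ∀ k : Fin (m + 3), ∫ t in a..b, g k t
      = (((m : ℝ) + 2) / P k) * ((lam k - μ) ^ 2 * (lam k - a) ^ (m + 2) / (m + 2)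
          - 2 * (lam k - μ) * (lam k - a) ^ (m + 3) / (m + 3)
          + (lam k - a) ^ (m + 4) / (m + 4)) := by
    intro k
    have hcore : Continuous fun t => (t - μ) ^ 2 * max (lam k - t) 0 ^ (m + 1) :=
      ((continuous_id.sub continuous_const).pow 2).mul
        (((continuous_const.sub continuous_id).max continuous_const).pow (m + 1))
    rw [hg]
    simp only
    rw [intervalIntegral.integral_const_mul]
    congr 1
    rw [← intervalIntegral.integral_add_adjacent_intervals
      (hcore.intervalIntegrable a (lam k)) (hcore.intervalIntegrable (lam k) b)]
    have hzero : ∫ t in (lam k)..b, (t - μ) ^ 2 * max (lam k - t) 0 ^ (m + 1) = 0 := by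
      rw [intervalIntegral.integral_congr (g := fun _ => (0 : ℝ)) ?_,
        intervalIntegral.integral_zero]
      intro t ht
      rw [Set.uIcc_of_le (hlb k)] at ht
      have : max (lam k - t) 0 = 0 := max_eq_right (by linarith [ht.1])
      simp [this]
    rw [hzero, add_zero]
    -- FTC on [a, lam k]
    set F : ℝ → ℝ := fun t => -((lam k - μ) ^ 2 * (lam k - t) ^ (m + 2) / (m + 2))
        + 2 * (lam k - μ) * (lam k - t) ^ (m + 3) / (m + 3)
        - (lam k - t) ^ (m + 4) / (m + 4) with hF
    have hder : ∀ t ∈ Set.uIcc a (lam k),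
        HasDerivAt F ((t - μ) ^ 2 * (lam k - t) ^ (m + 1)) t := by
      intro t _
      have h0 : HasDerivAt (fun t : ℝ => lam k - t) (-1) t := (hasDerivAt_id t).const_sub (lam k)
      have h2 := (((h0.pow (m + 2)).const_mul ((lam k - μ) ^ 2)).div_const ((m : ℝ) + 2)).neg
      have h3 := ((h0.pow (m + 3)).const_mul (2 * (lam k - μ))).div_const ((m : ℝ) + 3)
      have h4 := ((h0.pow (m + 4)).div_const ((m : ℝ) + 4))
      have h := (h2.add h3).sub h4
      convert h using 1
      · rfl
      · rfl
      · rfl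
      have e2 : (m + 2 : ℕ) - 1 = m + 1 := by omega
      have e3 : (m + 3 : ℕ) - 1 = m + 2 := by omega
      have e4 : (m + 4 : ℕ) - 1 = m + 3 := by omega
      rw [e2, e3, e4]
      push_cast
      have hm2 : (m : ℝ) + 2 ≠ 0 := by positivity
      have hm3 : (m : ℝ) + 3 ≠ 0 := by positivity
      have hm4 : (m : ℝ) + 4 ≠ 0 := by positivity
      field_simp
      ring
    have hcongr : ∀ t ∈ Set.uIcc a (lam k),
        (t - μ) ^ 2 * max (lam k - t) 0 ^ (m + 1) = (t - μ) ^ 2 * (lam k - t) ^ (m + 1) := by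
      intro t ht
      rw [Set.uIcc_of_le (hla k)] at ht
      rw [max_eq_left (by linarith [ht.2])]
    rw [intervalIntegral.integral_congr hcongr]
    rw [intervalIntegral.integral_eq_sub_of_hasDerivAt hder
      (((((continuous_id.sub continuous_const).pow 2).mul
        ((continuous_const.sub continuous_id).pow (m + 1))).intervalIntegrable a (lam k)))]
    rw [hF]
    simp only
    rw [sub_self]
    rw [zero_pow (by omega), zero_pow (by omega), zero_pow (by omega)]
    ring
  rw [Finset.sum_congr rfl fun k _ => hval k]
  -- reorganize the sum and apply Sval lemmas
  have hm2 : (m : ℝ) + 2 ≠ 0 := by positivity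
  have hm3 : (m : ℝ) + 3 ≠ 0 := by positivity
  have hm4 : (m : ℝ) + 4 ≠ 0 := by positivity
  have hterm : ∀ k : Fin (m + 3),
      (((m : ℝ) + 2) / P k) * ((lam k - μ) ^ 2 * (lam k - a) ^ (m + 2) / (m + 2)
          - 2 * (lam k - μ) * (lam k - a) ^ (m + 3) / (m + 3)
          + (lam k - a) ^ (m + 4) / (m + 4))
      = (2 / (((m : ℝ) + 3) * ((m : ℝ) + 4))) * ((lam k - a) ^ (m + 4) / P k)
        + (-2 * (μ - a) / ((m : ℝ) + 3)) * ((lam k - a) ^ (m + 3) / P k)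
        + (μ - a) ^ 2 * ((lam k - a) ^ (m + 2) / P k) := by
    intro k
    have hPk : P k ≠ 0 := by
      rw [hP]
      exact Finset.prod_ne_zero_iff.mpr fun i hi =>
        sub_ne_zero_of_ne (hinj.ne (Finset.ne_of_mem_erase hi).symm)
    field_simp
    ring
  rw [Finset.sum_congr rfl fun k _ => hterm k]
  rw [Finset.sum_add_distrib, Finset.sum_add_distrib, ← Finset.mul_sum, ← Finset.mul_sum,
    ← Finset.mul_sum]
  rw [hP] at *
  rw [Sval_one lam a hinj, Sval_two lam a hinj, Sval_three lam a hinj]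
  -- final algebra
  set A : ℝ := ∑ k, lam k with hA
  set Q : ℝ := ∑ k, (lam k) ^ 2 with hQ
  have hE : A ^ 2 = Q + 2 * ∑ i, ∑ j ∈ Finset.Iio i, lam i * lam j := by
    have h := sum_sum_Iio_eq (m + 3) (fun i j => lam i * lam j) (fun i j => mul_comm _ _)
    rw [← Finset.sum_mul_sum] at h
    have hdiag : ∑ i : Fin (m + 3), lam i * lam i = Q := by
      rw [hQ]; exact Finset.sum_congr rfl fun i _ => (sq (lam i)).symm
    rw [hdiag] at h
    rw [hA, sq, h]
  have hR : 2 * ∑ i, ∑ j ∈ Finset.Iio i, (lam i - lam j) ^ 2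
      = 2 * ((m : ℝ) + 3) * Q - 2 * A ^ 2 := by
    have h := sum_sum_Iio_eq (m + 3) (fun i j => (lam i - lam j) ^ 2)
      (fun i j => by ring)
    simp only [sub_self, zero_pow (by norm_num : (2:ℕ) ≠ 0), Finset.sum_const_zero,
      zero_add] at h
    rw [← h]
    simp only [sub_sq]
    simp only [Finset.sum_add_distrib, Finset.sum_sub_distrib, ← Finset.mul_sum,
      ← Finset.sum_mul, Finset.sum_const, Finset.card_univ, Fintype.card_fin, nsmul_eq_mul]
    rw [← hA, ← hQ]
    push_cast
    ring
  have hE' : (∑ i, ∑ j ∈ Finset.Iio i, lam i * lam j) = (A ^ 2 - Q) / 2 := by linarith [hE]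
  have hR' : (∑ i : Fin (m + 3), ∑ j ∈ Finset.Iio i, (lam i - lam j) ^ 2)
      = ((m : ℝ) + 3) * Q - A ^ 2 := by linarith [hR]
  rw [hE', hR', Nat.cast_choose_two]
  rw [hμ]
  have hm3 : ((m : ℝ) + 3) ≠ 0 := by positivity
  have hm4 : ((m : ℝ) + 4) ≠ 0 := by positivity
  push_cast
  field_simp
  ring
end

section
/- Let n ≥ 3 and let λ_1 < λ_2 < ⋯ < λ_n be pairwise distinct reals, and let M be the fundamental B-spline with knots λ_1, …, λ_n. Then for every natural number k ≥ 1, the k-th raw moment satisfies ∫_{-∞}^{∞} t^k · M(t) dt = (k! · (n−1)!/(n+k−1)!) · Σ_{β} λ_1^{β_1} ⋯ λ_n^{β_n}, where the sum runs over all multi-indices β ∈ ℕⁿ with β_1 + ⋯ + β_n = k. -/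
open Finset MeasureTheory intervalIntegral

/-- Complete homogeneous symmetric polynomial evaluated on a list. -/
noncomputable def hh : ℕ → List ℝ → ℝ
  | 0, _ => 1
  | _+1, [] => 0
  | j+1, x :: l => x * hh j (x :: l) + hh (j+1) l
  termination_by j l => (j, l.length)

@[simp] lemma hh_zero (l : List ℝ) : hh 0 l = 1 := by rw [hh]
@[simp] lemma hh_succ_nil (j : ℕ) : hh (j+1) [] = 0 := by rw [hh]
lemma hh_succ_cons (j : ℕ) (x : ℝ) (l : List ℝ) :
    hh (j+1) (x :: l) = x * hh j (x :: l) + hh (j+1) l := by rw [hh]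

lemma hh_singleton (m : ℕ) (x : ℝ) : hh m [x] = x ^ m := by
  induction m with
  | zero => simp
  | succ j ih => rw [hh_succ_cons, ih]; simp [pow_succ, mul_comm]

lemma hh_mul_sub (j : ℕ) (x y : ℝ) (S : List ℝ) :
    x * hh j (x :: S) - y * hh j (y :: S) = (x - y) * hh j (x :: y :: S) := by
  induction j generalizing S with
  | zero => simp
  | succ i ih =>
    have hq : hh (i+1) (x :: S) - hh (i+1) (y :: S) = (x - y) * hh i (x :: y :: S) := by
      rw [hh_succ_cons, hh_succ_cons]
      have := ih S
      linarith
    calc x * hh (i+1) (x :: S) - y * hh (i+1) (y :: S)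
        = x * (hh (i+1) (x :: S) - hh (i+1) (y :: S)) + (x - y) * hh (i+1) (y :: S) := by ring
      _ = x * ((x - y) * hh i (x :: y :: S)) + (x - y) * hh (i+1) (y :: S) := by rw [hq]
      _ = (x - y) * (x * hh i (x :: y :: S) + hh (i+1) (y :: S)) := by ring
      _ = (x - y) * hh (i+1) (x :: y :: S) := by rw [← hh_succ_cons]

lemma hh_sub (j : ℕ) (x y : ℝ) (S : List ℝ) :
    hh (j+1) (x :: S) - hh (j+1) (y :: S) = (x - y) * hh j (x :: y :: S) := by
  rw [hh_succ_cons, hh_succ_cons]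
  have := hh_mul_sub j x y S
  linarith

/-- Divided difference of the monomial `x^m` over a finite set of nodes. -/
noncomputable def ddiff (m : ℕ) (s : Finset ℝ) : ℝ :=
  ∑ x ∈ s, x ^ m / ∏ y ∈ s.erase x, (x - y)

lemma prod_sub_ne_zero {z : ℝ} {t : Finset ℝ} (hz : z ∉ t) : ∏ w ∈ t, (z - w) ≠ 0 := by
  refine Finset.prod_ne_zero_iff.mpr fun w hw => sub_ne_zero.mpr ?_
  rintro rfl; exact hz hw

lemma ddiff_rec (m : ℕ) (s : Finset ℝ) (x y : ℝ) (hx : x ∉ s) (hy : y ∉ s) (hxy : x ≠ y) :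
    ddiff m (insert x (insert y s)) = (ddiff m (insert x s) - ddiff m (insert y s)) / (x - y) := by
  classical
  have hxy' : x - y ≠ 0 := sub_ne_zero.mpr hxy
  have hxs : x ∉ insert y s := by simp [hxy, hx]
  have hys : y ∉ insert x s := by simp [Ne.symm hxy, hy]
  have hQx : ∏ w ∈ s, (x - w) ≠ 0 := prod_sub_ne_zero hx
  have hQy : ∏ w ∈ s, (y - w) ≠ 0 := prod_sub_ne_zero hy
  have e1 : (insert x (insert y s)).erase x = insert y s := Finset.erase_insert hxs
  have e2 : (insert x (insert y s)).erase y = insert x s := by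
    rw [Finset.erase_insert_of_ne hxy, Finset.erase_insert hy]
  have e3 : (insert x s).erase x = s := Finset.erase_insert hx
  have e4 : (insert y s).erase y = s := Finset.erase_insert hy
  rw [ddiff, ddiff, ddiff, Finset.sum_insert hxs, Finset.sum_insert hy,
    Finset.sum_insert hx, Finset.sum_insert hy, e1, e2, e3, e4]
  have ez : ∀ z ∈ s, (insert x (insert y s)).erase z = insert x (insert y (s.erase z)) := by
    intro z hz
    have hzx : z ≠ x := fun h => hx (h ▸ hz)
    have hzy : z ≠ y := fun h => hy (h ▸ hz)
    rw [Finset.erase_insert_of_ne hzx.symm, Finset.erase_insert_of_ne hzy.symm]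
  have ezx : ∀ z ∈ s, (insert x s).erase z = insert x (s.erase z) := by
    intro z hz
    have hzx : z ≠ x := fun h => hx (h ▸ hz)
    rw [Finset.erase_insert_of_ne hzx.symm]
  have ezy : ∀ z ∈ s, (insert y s).erase z = insert y (s.erase z) := by
    intro z hz
    have hzy : z ≠ y := fun h => hy (h ▸ hz)
    rw [Finset.erase_insert_of_ne hzy.symm]
  -- rewrite each sum over s into canonical per-node form
  have hsumL : ∑ z ∈ s, z ^ m / ∏ w ∈ (insert x (insert y s)).erase z, (z - w)
      = ∑ z ∈ s, z ^ m / ((z - x) * ((z - y) * ∏ w ∈ s.erase z, (z - w))) := by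
    refine Finset.sum_congr rfl fun z hz => ?_
    have hxm : x ∉ insert y (s.erase z) := by
      simp [Finset.mem_insert, Finset.mem_erase, hxy, hx]
    have hym : y ∉ s.erase z := fun h => hy (Finset.mem_of_mem_erase h)
    rw [ez z hz, Finset.prod_insert hxm, Finset.prod_insert hym]
  have hsumRx : ∑ z ∈ s, z ^ m / ∏ w ∈ (insert x s).erase z, (z - w)
      = ∑ z ∈ s, z ^ m / ((z - x) * ∏ w ∈ s.erase z, (z - w)) := by
    refine Finset.sum_congr rfl fun z hz => ?_
    have hxm : x ∉ s.erase z := fun h => hx (Finset.mem_of_mem_erase h)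
    rw [ezx z hz, Finset.prod_insert hxm]
  have hsumRy : ∑ z ∈ s, z ^ m / ∏ w ∈ (insert y s).erase z, (z - w)
      = ∑ z ∈ s, z ^ m / ((z - y) * ∏ w ∈ s.erase z, (z - w)) := by
    refine Finset.sum_congr rfl fun z hz => ?_
    have hym : y ∉ s.erase z := fun h => hy (Finset.mem_of_mem_erase h)
    rw [ezy z hz, Finset.prod_insert hym]
  rw [hsumL, hsumRx, hsumRy, Finset.prod_insert hy, Finset.prod_insert hx]
  rw [sub_div, add_div, add_div]
  have hP : ∀ z ∈ s, ∏ w ∈ s.erase z, (z - w) ≠ 0 := fun z hz =>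
    prod_sub_ne_zero (Finset.notMem_erase z s)
  have hsum : ∑ z ∈ s, z ^ m / ((z - x) * ((z - y) * ∏ w ∈ s.erase z, (z - w)))
      = (∑ z ∈ s, z ^ m / ((z - x) * ∏ w ∈ s.erase z, (z - w))) / (x - y)
        - (∑ z ∈ s, z ^ m / ((z - y) * ∏ w ∈ s.erase z, (z - w))) / (x - y) := by
    rw [Finset.sum_div, Finset.sum_div, ← Finset.sum_sub_distrib]
    refine Finset.sum_congr rfl fun z hz => ?_
    have hzx : z - x ≠ 0 := sub_ne_zero.mpr fun h => hx (h ▸ hz)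
    have hzy : z - y ≠ 0 := sub_ne_zero.mpr fun h => hy (h ▸ hz)
    have hPz := hP z hz
    field_simp
    ring
  have hspec : x ^ m / ((x - y) * ∏ w ∈ s, (x - w)) + y ^ m / ((y - x) * ∏ w ∈ s, (y - w))
      = (x ^ m / ∏ w ∈ s, (x - w)) / (x - y) - (y ^ m / ∏ w ∈ s, (y - w)) / (x - y) := by
    rw [div_div, div_div,
      show (y - x) * ∏ w ∈ s, (y - w) = -((x - y) * ∏ w ∈ s, (y - w)) from by ring,
      div_neg, mul_comm (x - y) (∏ w ∈ s, (x - w)), mul_comm (x - y) (∏ w ∈ s, (y - w)),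
      ← sub_eq_add_neg]
  linarith [hsum, hspec]

lemma ddiff_eq_aux : ∀ (N : ℕ) (l : List ℝ), l.length ≤ N → l.Nodup → ∀ m : ℕ,
    ddiff m l.toFinset = if l.length ≤ m + 1 then hh (m + 1 - l.length) l else 0 := by
  intro N
  induction N with
  | zero =>
    intro l hl _ m
    have : l = [] := List.length_eq_zero_iff.mp (Nat.le_zero.mp hl)
    subst this
    simp [ddiff]
  | succ N ih =>
    intro l hl hnd m
    match l with
    | [] => simp [ddiff]
    | [x] => simp [ddiff, hh_singleton]
    | x :: y :: S =>
      have hxyS : x ∉ (y :: S) ∧ (y :: S).Nodup := List.nodup_cons.mp hnd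
      have hyS : y ∉ S ∧ S.Nodup := List.nodup_cons.mp hxyS.2
      have hxy : x ≠ y := fun h => hxyS.1 (h ▸ (List.mem_cons_self : y ∈ y :: S))
      have hxS : x ∉ S := fun h => hxyS.1 (List.mem_cons_of_mem y h)
      have hxF : x ∉ S.toFinset := fun h => hxS (List.mem_toFinset.mp h)
      have hyF : y ∉ S.toFinset := fun h => hyS.1 (List.mem_toFinset.mp h)
      have htf : (x :: y :: S).toFinset = insert x (insert y S.toFinset) := by simp
      have htfx : (x :: S).toFinset = insert x S.toFinset := by simp
      have htfy : (y :: S).toFinset = insert y S.toFinset := by simp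
      have hndx : (x :: S).Nodup := List.nodup_cons.mpr ⟨hxS, hyS.2⟩
      have hlenx : (x :: S).length ≤ N := by simp at hl ⊢; omega
      have hleny : (y :: S).length ≤ N := by simp at hl ⊢; omega
      have h1 := ih (x :: S) hlenx hndx m
      have h2 := ih (y :: S) hleny hxyS.2 m
      rw [htfx] at h1
      rw [htfy] at h2
      rw [htf, ddiff_rec m S.toFinset x y hxF hyF hxy, h1, h2]
      simp only [List.length_cons]
      by_cases hc : S.length + 1 + 1 ≤ m + 1
      · rw [if_pos hc, if_pos (by omega), if_pos (by omega)]
        obtain ⟨j, hj⟩ : ∃ j, m + 1 - (S.length + 1) = j + 1 := ⟨m - S.length - 1, by omega⟩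
        rw [hj, hh_sub j x y S,
          mul_div_cancel_left₀ _ (sub_ne_zero.mpr hxy),
          show m + 1 - (S.length + 1 + 1) = j from by omega]
      · rw [if_neg hc]
        by_cases hc2 : S.length + 1 ≤ m + 1
        · rw [if_pos hc2, if_pos hc2, show m + 1 - (S.length + 1) = 0 from by omega]
          simp
        · rw [if_neg hc2, if_neg hc2]
          simp

theorem ddiff_eq (l : List ℝ) (hnd : l.Nodup) (m : ℕ) :
    ddiff m l.toFinset = if l.length ≤ m + 1 then hh (m + 1 - l.length) l else 0 :=
  ddiff_eq_aux l.length l le_rfl hnd m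

lemma hh_cons (j : ℕ) (x : ℝ) (l : List ℝ) :
    hh j (x :: l) = ∑ p ∈ Finset.HasAntidiagonal.antidiagonal j, x ^ p.1 * hh p.2 l := by
  induction j with
  | zero => simp
  | succ i ih =>
    rw [hh_succ_cons, ih, Finset.Nat.antidiagonal_succ, Finset.sum_cons, Finset.sum_map,
      Finset.mul_sum]
    simp only [Function.Embedding.coeFn_mk, Function.Embedding.prodMap,
      Function.Embedding.refl_apply, Prod.map]
    rw [pow_zero, one_mul, add_comm]
    congr 1
    refine Finset.sum_congr rfl fun p _ => ?_
    rw [pow_succ]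
    ring

lemma bridge : ∀ (n k : ℕ) (f : Fin n → ℝ),
    ∑ β ∈ Finset.Nat.antidiagonalTuple n k, ∏ i, f i ^ β i = hh k (List.ofFn f) := by
  intro n
  induction n with
  | zero =>
    intro k f
    match k with
    | 0 => simp
    | k + 1 => simp
  | succ n ih =>
    intro k f
    rw [List.ofFn_succ, hh_cons]
    simp only [← ih]
    have : ∀ p ∈ Finset.HasAntidiagonal.antidiagonal k,
        f 0 ^ p.1 * ∑ β ∈ Finset.Nat.antidiagonalTuple n p.2, ∏ i, (fun i => f (Fin.succ i)) i ^ β i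
        = ∑ β ∈ Finset.Nat.antidiagonalTuple n p.2, f 0 ^ p.1 * ∏ i, f (Fin.succ i) ^ β i :=
      fun p _ => Finset.mul_sum _ _ _
    rw [Finset.sum_congr rfl this, Finset.sum_sigma']
    symm
    refine Finset.sum_nbij' (fun q => Fin.cons q.1.1 q.2) (fun β => ⟨(β 0, ∑ i : Fin n, β i.succ), Fin.tail β⟩)
      ?_ ?_ ?_ ?_ ?_
    · rintro ⟨⟨a, b⟩, β⟩ hq
      simp only [Finset.mem_sigma, Finset.HasAntidiagonal.mem_antidiagonal, Finset.Nat.mem_antidiagonalTuple] at hq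
      rw [Finset.Nat.mem_antidiagonalTuple, Fin.sum_univ_succ]
      simp only [Fin.cons_zero, Fin.cons_succ]
      rw [hq.2]
      exact hq.1
    · intro β hβ
      rw [Finset.Nat.mem_antidiagonalTuple] at hβ
      simp only [Finset.mem_sigma, Finset.HasAntidiagonal.mem_antidiagonal, Finset.Nat.mem_antidiagonalTuple]
      refine ⟨?_, rfl⟩
      rw [← hβ, Fin.sum_univ_succ]
    · rintro ⟨⟨a, b⟩, β⟩ hq
      simp only [Finset.mem_sigma, Finset.HasAntidiagonal.mem_antidiagonal, Finset.Nat.mem_antidiagonalTuple] at hq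
      refine Sigma.ext ?_ ?_
      · simp [hq.2]
      · simp [Fin.tail_cons]
    · intro β _
      exact Fin.cons_self_tail β
    · rintro ⟨⟨a, b⟩, β⟩ _
      rw [Fin.prod_univ_succ]
      simp only [Fin.cons_zero, Fin.cons_succ]

lemma toFinset_ofFn {n : ℕ} (f : Fin n → ℝ) :
    (List.ofFn f).toFinset = Finset.image f Finset.univ := by
  ext a
  simp [List.mem_ofFn]

lemma sum_fin_eq_ddiff {n : ℕ} (f : Fin n → ℝ) (hf : Function.Injective f) (m : ℕ) :
    ∑ k : Fin n, f k ^ m / ∏ i ∈ Finset.univ.erase k, (f k - f i)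
      = ddiff m (Finset.image f Finset.univ) := by
  rw [ddiff, Finset.sum_image (fun x _ y _ h => hf h)]
  refine Finset.sum_congr rfl fun k _ => ?_
  congr 1
  rw [← Finset.image_erase hf, Finset.prod_image (fun x _ y _ h => hf h)]

lemma sum_fin_ddiff_eq {n : ℕ} (f : Fin n → ℝ) (hf : Function.Injective f) (m : ℕ) :
    ∑ k : Fin n, f k ^ m / ∏ i ∈ Finset.univ.erase k, (f k - f i)
      = if n ≤ m + 1 then hh (m + 1 - n) (List.ofFn f) else 0 := by
  rw [sum_fin_eq_ddiff f hf m, ← toFinset_ofFn f, ddiff_eq _ (List.nodup_ofFn.mpr hf)]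
  simp

/-- Vanishing of divided differences of low-degree monomials. -/
lemma sum_fin_ddiff_zero {n : ℕ} (f : Fin n → ℝ) (hf : Function.Injective f) (m : ℕ)
    (hm : m + 1 < n) :
    ∑ k : Fin n, f k ^ m / ∏ i ∈ Finset.univ.erase k, (f k - f i) = 0 := by
  rw [sum_fin_ddiff_eq f hf m, if_neg (by omega)]

open MeasureTheory intervalIntegral in
lemma intI : ∀ (m k : ℕ) (a : ℝ), ∃ r : ℕ → ℝ, ∀ c : ℝ,
    (∫ t in a..c, t ^ k * (c - t) ^ m) =
      ((m.factorial * k.factorial : ℝ) / (m + k + 1).factorial) * c ^ (m + k + 1)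
      + ∑ j ∈ Finset.range (m + 1), r j * c ^ j := by
  intro m
  induction m with
  | zero =>
    intro k a
    refine ⟨fun _ => -a ^ (k + 1) / (k + 1), fun c => ?_⟩
    have hk : ((k : ℝ) + 1) ≠ 0 := by positivity
    have hfac : ((Nat.factorial 0 * Nat.factorial k : ℝ) / Nat.factorial (0 + k + 1))
        = 1 / ((k : ℝ) + 1) := by
      rw [Nat.factorial_zero]
      rw [show 0 + k + 1 = k + 1 from by omega, Nat.factorial_succ]
      have : (Nat.factorial k : ℝ) ≠ 0 := by positivity
      push_cast
      field_simp
    simp only [pow_zero, mul_one, Finset.sum_range_one]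
    rw [integral_pow, hfac]
    rw [show 0 + k + 1 = k + 1 from by omega]
    simp only [Nat.zero_add, Finset.sum_range_one]
    field_simp
    ring
  | succ m ihm =>
    intro k a
    obtain ⟨r, hr⟩ := ihm (k + 1) a
    refine ⟨fun j => (((m : ℝ) + 1) / ((k : ℝ) + 1)) * (if j ≤ m then r j else 0)
      - a ^ (k + 1) * ((-1 : ℝ) ^ (j + (m + 1)) * a ^ (m + 1 - j) * ((m + 1).choose j)) / ((k : ℝ) + 1),
      fun c => ?_⟩
    have hk : ((k : ℝ) + 1) ≠ 0 := by positivity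
    -- integration by parts
    have hu : ∀ x ∈ Set.uIcc a c, HasDerivAt (fun t => (c - t) ^ (m + 1))
        (-(((m : ℝ) + 1) * (c - x) ^ m)) x := by
      intro x _
      have h1 : HasDerivAt (fun t : ℝ => c - t) (-1) x := (hasDerivAt_id x).const_sub c
      have := h1.fun_pow (m + 1)
      simpa using this
    have hv : ∀ x ∈ Set.uIcc a c, HasDerivAt (fun t : ℝ => t ^ (k + 1) / ((k : ℝ) + 1))
        (x ^ k) x := by
      intro x _
      have := (hasDerivAt_pow (k + 1) x).div_const ((k : ℝ) + 1)
      simpa [Nat.add_sub_cancel, mul_div_assoc, mul_div_cancel_left₀ _ hk] using this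
    have hIBP := integral_mul_deriv_eq_deriv_mul hu hv
      (Continuous.intervalIntegrable (by continuity) a c)
      (Continuous.intervalIntegrable (by continuity) a c)
    have e1 : (∫ t in a..c, t ^ k * (c - t) ^ (m + 1))
        = ∫ t in a..c, (c - t) ^ (m + 1) * t ^ k := by
      apply integral_congr
      intro x _
      ring
    have e2 : (∫ x in a..c, -(((m : ℝ) + 1) * (c - x) ^ m) * (x ^ (k + 1) / ((k : ℝ) + 1)))
        = (-(((m : ℝ) + 1) / ((k : ℝ) + 1))) * ∫ x in a..c, x ^ (k + 1) * (c - x) ^ m := by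
      rw [← intervalIntegral.integral_const_mul]
      apply integral_congr
      intro x _
      field_simp
    rw [e1, hIBP, e2, hr c]
    rw [show (c - c) ^ (m + 1) = 0 from by simp]
    -- now pure algebra
    have hsub : (c - a) ^ (m + 1)
        = ∑ j ∈ Finset.range (m + 2), (-1 : ℝ) ^ (j + (m + 1)) * c ^ j * a ^ (m + 1 - j)
            * ((m + 1).choose j) := sub_pow c a (m + 1)
    have hS2 : ∑ j ∈ Finset.range (m + 2),
        (a ^ (k + 1) * ((-1 : ℝ) ^ (j + (m + 1)) * a ^ (m + 1 - j) * ((m + 1).choose j)) / ((k : ℝ) + 1)) * c ^ j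
        = (a ^ (k + 1) / ((k : ℝ) + 1)) * (c - a) ^ (m + 1) := by
      rw [hsub, Finset.mul_sum]
      refine Finset.sum_congr rfl fun j _ => ?_
      ring
    have hS1 : ∑ j ∈ Finset.range (m + 2),
        ((((m : ℝ) + 1) / ((k : ℝ) + 1)) * (if j ≤ m then r j else 0)) * c ^ j
        = (((m : ℝ) + 1) / ((k : ℝ) + 1)) * ∑ j ∈ Finset.range (m + 1), r j * c ^ j := by
      rw [Finset.mul_sum, Finset.sum_range_succ, if_neg (by omega)]
      simp only [mul_zero, zero_mul, add_zero]
      refine Finset.sum_congr rfl fun j hj => ?_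
      rw [if_pos (by exact Nat.lt_succ_iff.mp (Finset.mem_range.mp hj))]
      ring
    have hsplit : ∑ j ∈ Finset.range (m + 2),
        ((((m : ℝ) + 1) / ((k : ℝ) + 1)) * (if j ≤ m then r j else 0)
          - a ^ (k + 1) * ((-1 : ℝ) ^ (j + (m + 1)) * a ^ (m + 1 - j) * ((m + 1).choose j)) / ((k : ℝ) + 1)) * c ^ j
        = (((m : ℝ) + 1) / ((k : ℝ) + 1)) * (∑ j ∈ Finset.range (m + 1), r j * c ^ j)
          - (a ^ (k + 1) / ((k : ℝ) + 1)) * (c - a) ^ (m + 1) := by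
      simp only [sub_mul]
      rw [Finset.sum_sub_distrib, hS1, hS2]
    rw [hsplit]
    have hfac : ((Nat.factorial (m + 1) * Nat.factorial k : ℝ) / Nat.factorial (m + 1 + k + 1))
        = (((m : ℝ) + 1) / ((k : ℝ) + 1)) * ((Nat.factorial m * Nat.factorial (k + 1) : ℝ) / Nat.factorial (m + (k + 1) + 1)) := by
      rw [show m + 1 + k + 1 = m + (k + 1) + 1 from by omega, Nat.factorial_succ m,
        Nat.factorial_succ k]
      have h1 : (Nat.factorial m : ℝ) ≠ 0 := by positivity
      have h2 : (Nat.factorial (m + (k + 1) + 1) : ℝ) ≠ 0 := by positivity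
      push_cast
      field_simp
    rw [hfac, show m + (k + 1) + 1 = m + 1 + k + 1 from by omega]
    ring

open MeasureTheory

/-- The `k`-th raw moment of the distribution with density the fundamental B-spline:
`∫ t^k M(t) dt = (k!(n−1)!/(n+k−1)!) Σ_{|β| = k} λ^β`, the sum running over all
multi-indices `β ∈ ℕⁿ` with `β_1 + ⋯ + β_n = k`. -/
theorem fundamentalBSpline_raw_moment
    (n : ℕ) (hn : 3 ≤ n) (lam : Fin n → ℝ) (hlam : StrictMono lam) (k : ℕ) (hk : 1 ≤ k) :
    (∫ t : ℝ, t ^ k * fundamentalBSpline n lam t)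
      = ((Nat.factorial k * Nat.factorial (n - 1) : ℝ) / Nat.factorial (n + k - 1)) *
          ∑ β ∈ Finset.Nat.antidiagonalTuple n k, ∏ i : Fin n, lam i ^ β i := by
  classical
  have hinj : Function.Injective lam := hlam.injective
  have hi0 : 0 < n := by omega
  set i0 : Fin n := ⟨0, hi0⟩ with hi0def
  set a : ℝ := lam i0 with ha
  have hak : ∀ k' : Fin n, a ≤ lam k' := fun k' => hlam.monotone (Fin.le_def.mpr (Nat.zero_le _))
  set w : Fin n → ℝ := fun k' => ∏ i ∈ Finset.univ.erase k', (lam k' - lam i) with hw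
  have hw0 : ∀ k', w k' ≠ 0 := by
    intro k'
    refine Finset.prod_ne_zero_iff.mpr fun i hi => sub_ne_zero.mpr fun h => ?_
    exact (Finset.mem_erase.mp hi).1 (hinj h.symm)
  set g : Fin n → ℝ → ℝ := fun k' => Set.indicator (Set.Icc a (lam k'))
    (fun t => ((n : ℝ) - 1) * (t ^ k * max (lam k' - t) 0 ^ (n - 2)) / w k') with hg
  -- pointwise identity
  have hpt : ∀ t : ℝ, t ^ k * fundamentalBSpline n lam t = ∑ k', g k' t := by
    intro t
    by_cases hta : a ≤ t
    · have hgt : ∀ k', g k' t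
          = ((n : ℝ) - 1) * (t ^ k * max (lam k' - t) 0 ^ (n - 2)) / w k' := by
        intro k'
        simp only [hg]
        by_cases htk : t ≤ lam k'
        · exact Set.indicator_of_mem (Set.mem_Icc.mpr ⟨hta, htk⟩) _
        · rw [Set.indicator_of_notMem (fun hmem => htk hmem.2)]
          rw [max_eq_right (by linarith), zero_pow (by omega)]
          simp
      rw [Finset.sum_congr rfl fun k' _ => hgt k', fundamentalBSpline, Finset.mul_sum,
        Finset.mul_sum]
      refine Finset.sum_congr rfl fun k' _ => ?_
      rw [hw]
      field_simp
    · push_neg at hta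
      have hgz : ∀ k', g k' t = 0 := by
        intro k'
        simp only [hg]
        exact Set.indicator_of_notMem (fun hmem => absurd hmem.1 (not_le.mpr hta)) _
      rw [Finset.sum_congr rfl fun k' _ => hgz k', Finset.sum_const, smul_zero]
      have hF : Function.Injective (fun i => lam i - t) := fun i j h => by
        apply hinj; dsimp at h; linarith
      have hzero : ∑ k' : Fin n, (lam k' - t) ^ (n - 2)
          / ∏ i ∈ Finset.univ.erase k', ((lam k' - t) - (lam i - t)) = 0 :=
        sum_fin_ddiff_zero (fun i => lam i - t) hF (n - 2) (by omega)
      have hrw : ∑ k' : Fin n, max (lam k' - t) 0 ^ (n - 2)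
            / ∏ i ∈ Finset.univ.erase k', (lam k' - lam i)
          = ∑ k' : Fin n, (lam k' - t) ^ (n - 2)
            / ∏ i ∈ Finset.univ.erase k', ((lam k' - t) - (lam i - t)) := by
        refine Finset.sum_congr rfl fun k' _ => ?_
        rw [max_eq_left (by linarith [hak k'])]
        congr 1
        refine Finset.prod_congr rfl fun i _ => ?_
        ring
      rw [fundamentalBSpline, hrw, hzero]
      ring
  -- continuity and integrability
  have hcont : ∀ k', Continuous (fun t : ℝ =>
      ((n : ℝ) - 1) * (t ^ k * max (lam k' - t) 0 ^ (n - 2)) / w k') := by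
    intro k'
    apply Continuous.div_const
    exact (continuous_const.mul ((continuous_pow k).mul
      (((continuous_const.sub continuous_id).max continuous_const).pow (n - 2))))
  have hint : ∀ k', Integrable (g k') := by
    intro k'
    rw [hg]
    exact ((hcont k').integrableOn_Icc).integrable_indicator measurableSet_Icc
  -- split integral
  have hsplit : (∫ t : ℝ, t ^ k * fundamentalBSpline n lam t) = ∑ k', ∫ t : ℝ, g k' t := by
    rw [← integral_finset_sum Finset.univ (fun k' _ => hint k')]
    simp only [hpt]
  -- compute each integral
  obtain ⟨r, hr⟩ := intI (n - 2) k a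
  have hcomp : ∀ k', (∫ t : ℝ, g k' t)
      = (((n : ℝ) - 1) / w k') *
        (((((n - 2 : ℕ).factorial * k.factorial : ℝ)) / ((n - 2) + k + 1).factorial)
            * lam k' ^ ((n - 2) + k + 1)
          + ∑ j ∈ Finset.range ((n - 2) + 1), r j * lam k' ^ j) := by
    intro k'
    have hak : a ≤ lam k' := hak k'
    simp only [hg]
    rw [MeasureTheory.integral_indicator measurableSet_Icc, integral_Icc_eq_integral_Ioc,
      ← intervalIntegral.integral_of_le hak]
    have hcongr : (∫ t in a..lam k',
        ((n : ℝ) - 1) * (t ^ k * max (lam k' - t) 0 ^ (n - 2)) / w k')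
        = ∫ t in a..lam k', (((n : ℝ) - 1) / w k') * (t ^ k * (lam k' - t) ^ (n - 2)) := by
      apply intervalIntegral.integral_congr
      intro x hx
      rw [Set.uIcc_of_le hak] at hx
      dsimp only
      rw [max_eq_left (by linarith [hx.2])]
      ring
    rw [hcongr, intervalIntegral.integral_const_mul, hr (lam k')]
  rw [hsplit, Finset.sum_congr rfl fun k' _ => hcomp k']
  -- expand the sum
  set C : ℝ := (((n - 2 : ℕ).factorial * k.factorial : ℝ)) / ((n - 2) + k + 1).factorial with hC
  have e1 : ∀ k' : Fin n, (((n : ℝ) - 1) / w k') *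
        (C * lam k' ^ ((n - 2) + k + 1) + ∑ j ∈ Finset.range ((n - 2) + 1), r j * lam k' ^ j)
      = ((n : ℝ) - 1) * C * (lam k' ^ ((n - 2) + k + 1) / w k')
        + ∑ j ∈ Finset.range ((n - 2) + 1), ((n : ℝ) - 1) * (r j * (lam k' ^ j / w k')) := by
    intro k'
    rw [mul_add, Finset.mul_sum]
    congr 1
    · ring
    · refine Finset.sum_congr rfl fun j _ => ?_
      ring
  rw [Finset.sum_congr rfl fun k' _ => e1 k', Finset.sum_add_distrib, Finset.sum_comm]
  -- vanishing terms
  have hvan : ∀ j ∈ Finset.range ((n - 2) + 1),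
      ∑ k' : Fin n, ((n : ℝ) - 1) * (r j * (lam k' ^ j / w k')) = 0 := by
    intro j hj
    rw [← Finset.mul_sum, ← Finset.mul_sum, hw]
    rw [sum_fin_ddiff_zero lam hinj j (by have := Finset.mem_range.mp hj; omega)]
    ring
  rw [Finset.sum_congr rfl hvan, Finset.sum_const, smul_zero, add_zero, ← Finset.mul_sum]
  -- main term
  have hmain : ∑ k' : Fin n, lam k' ^ ((n - 2) + k + 1) / w k'
      = ∑ β ∈ Finset.Nat.antidiagonalTuple n k, ∏ i : Fin n, lam i ^ β i := by
    rw [hw, sum_fin_ddiff_eq lam hinj ((n - 2) + k + 1), if_pos (by omega)]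
    rw [show (n - 2) + k + 1 + 1 - n = k from by omega]
    exact (bridge n k lam).symm
  rw [hmain]
  -- the constants
  have h2 : ((n - 2 : ℕ) : ℝ) = (n : ℝ) - 2 := by
    have h : (2 : ℕ) ≤ n := by omega
    push_cast [Nat.cast_sub h]
    ring
  have hfacs : ((n : ℝ) - 1) * C
      = (Nat.factorial k * Nat.factorial (n - 1) : ℝ) / Nat.factorial (n + k - 1) := by
    rw [hC, show (n - 2) + k + 1 = n + k - 1 from by omega,
      show n - 1 = (n - 2) + 1 from by omega, Nat.factorial_succ]
    push_cast
    rw [h2]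
    ring
  rw [hfacs]
end

section
/- Let n ≥ 1 and let λ_1, …, λ_n be real numbers with 0 ≤ λ_i ≤ 1 for all i. Then Σ_{1 ≤ j < i ≤ n} (λ_i − λ_j)² ≤ n²/4; consequently the variance (1/((n+1)·n²)) · Σ_{i>j} (λ_i − λ_j)² of the transmissivity distribution of a passive system is at most 1/(4(n+1)). Moreover, when n is even, equality holds if n/2 of the λ_i equal 0 and n/2 equal 1. -/
open scoped Classical

open Finset in
lemma swap_Ioi_Iio {n : ℕ} (g : Fin n → Fin n → ℝ) :
    ∑ i : Fin n, ∑ j ∈ Ioi i, g i j = ∑ i : Fin n, ∑ j ∈ Iio i, g j i := by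
  rw [sum_sigma', sum_sigma']
  refine sum_nbij' (fun p ↦ ⟨p.2, p.1⟩) (fun p ↦ ⟨p.2, p.1⟩) ?_ ?_ ?_ ?_ ?_ <;> simp

open Finset in
open Finset in
lemma key_identity {n : ℕ} (f : Fin n → ℝ) :
    ∑ i : Fin n, ∑ j ∈ Iio i, (f i - f j) ^ 2
      = n * (∑ i, f i ^ 2) - (∑ i, f i) ^ 2 := by
  have e1 : ∀ i : Fin n, ∑ j : Fin n, (f i - f j) ^ 2
      = (n * f i ^ 2 + (∑ j, f j ^ 2)) - f i * (2 * ∑ j, f j) := by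
    intro i
    rw [Finset.sum_congr rfl (fun j _ => by ring :
        ∀ j ∈ univ, (f i - f j) ^ 2 = (f i ^ 2 + f j ^ 2) - f i * (2 * f j)),
      sum_sub_distrib, sum_add_distrib, sum_const, ← mul_sum, ← mul_sum,
      card_univ, Fintype.card_fin, nsmul_eq_mul]
  have T : ∑ i : Fin n, ∑ j : Fin n, (f i - f j) ^ 2
      = 2 * (n * (∑ i, f i ^ 2) - (∑ i, f i) ^ 2) := by
    rw [Finset.sum_congr rfl (fun i _ => e1 i), sum_sub_distrib, sum_add_distrib,
      ← mul_sum, sum_const, ← sum_mul, card_univ, Fintype.card_fin, nsmul_eq_mul]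
    ring
  have split : ∀ i : Fin n, ∑ j : Fin n, (f i - f j) ^ 2
      = ((f i - f i) ^ 2 + ∑ j ∈ ({i} : Finset (Fin n))ᶜ, (f i - f j) ^ 2) := by
    intro i
    exact Fintype.sum_eq_add_sum_compl i (fun j => (f i - f j) ^ 2)
  have split2 : ∀ i : Fin n, ∑ j ∈ ({i} : Finset (Fin n))ᶜ, (f i - f j) ^ 2
      = (∑ j ∈ Ioi i, (f i - f j) ^ 2) + ∑ j ∈ Iio i, (f i - f j) ^ 2 := by
    intro i
    rw [← Finset.sum_disjUnion (Finset.disjoint_Ioi_Iio i)]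
    refine Finset.sum_congr ?_ fun _ _ => rfl
    ext j
    simp only [Finset.mem_compl, Finset.mem_singleton, Finset.mem_disjUnion, Finset.mem_Ioi,
      Finset.mem_Iio, lt_or_lt_iff_ne, ← ne_eq]
    exact ne_comm
  simp_rw [split, split2, sub_self] at T
  simp only [ne_eq, OfNat.ofNat_ne_zero, not_false_eq_true, zero_pow, sum_const_zero,
    zero_add] at T
  rw [sum_add_distrib] at T
  have hsw := swap_Ioi_Iio (fun i j => (f i - f j) ^ 2)
  have sym : ∑ i : Fin n, ∑ j ∈ Iio i, (f j - f i) ^ 2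
      = ∑ i : Fin n, ∑ j ∈ Iio i, (f i - f j) ^ 2 := by
    congr 1; ext i; congr 1; ext j; ring
  rw [hsw, sym] at T
  linarith

/-- For `λ_1, …, λ_n ∈ [0, 1]`: the sum `Σ_{j<i} (λ_i − λ_j)²` is at most `n²/4`; hence the
variance `(1/((n+1)n²)) Σ_{i>j} (λ_i − λ_j)²` of the transmissivity distribution of a passive
system is at most `1/(4(n+1))`. When `n` is even, equality holds if `n/2` of the `λ_i` equal
`0` and `n/2` of them equal `1`. -/
theorem passive_variance_bound
    (n : ℕ) (hn : 1 ≤ n) (lam : Fin n → ℝ) (h : ∀ i, lam i ∈ Set.Icc (0 : ℝ) 1) :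
    (∑ i : Fin n, ∑ j ∈ Finset.Iio i, (lam i - lam j) ^ 2 ≤ (n : ℝ) ^ 2 / 4) ∧
    ((1 / (((n : ℝ) + 1) * (n : ℝ) ^ 2)) *
        ∑ i : Fin n, ∑ j ∈ Finset.Iio i, (lam i - lam j) ^ 2
      ≤ 1 / (4 * ((n : ℝ) + 1))) ∧
    (Even n →
      (Finset.univ.filter (fun i : Fin n => lam i = 0)).card = n / 2 →
      (Finset.univ.filter (fun i : Fin n => lam i = 1)).card = n / 2 →
      ∑ i : Fin n, ∑ j ∈ Finset.Iio i, (lam i - lam j) ^ 2 = (n : ℝ) ^ 2 / 4) := by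
  have hid := key_identity lam
  set S := ∑ i, lam i with hS
  set Q := ∑ i, lam i ^ 2 with hQ
  have hQS : Q ≤ S := by
    apply Finset.sum_le_sum
    intro i _
    have := h i
    nlinarith [this.1, this.2]
  have hS0 : 0 ≤ S := Finset.sum_nonneg fun i _ => (h i).1
  have hSn : S ≤ n := by
    calc S ≤ ∑ _i : Fin n, (1:ℝ) := Finset.sum_le_sum fun i _ => (h i).2
    _ = n := by simp
  have h1 : ∑ i : Fin n, ∑ j ∈ Finset.Iio i, (lam i - lam j) ^ 2 ≤ (n : ℝ) ^ 2 / 4 := by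
    rw [hid]
    nlinarith [mul_le_mul_of_nonneg_left hQS (Nat.cast_nonneg n : (0:ℝ) ≤ (n:ℝ)), sq_nonneg (2*S - n)]
  refine ⟨h1, ?_, ?_⟩
  · have hn' : (1:ℝ) ≤ n := by exact_mod_cast hn
    have hpos : 0 < ((n : ℝ) + 1) * (n : ℝ) ^ 2 := by positivity
    rw [div_mul_eq_mul_div, one_mul, div_le_div_iff₀ hpos (by positivity)]
    calc (∑ i : Fin n, ∑ j ∈ Finset.Iio i, (lam i - lam j) ^ 2) * (4 * ((n:ℝ) + 1))
        ≤ ((n:ℝ)^2/4) * (4 * ((n:ℝ) + 1)) := by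
          apply mul_le_mul_of_nonneg_right h1; positivity
      _ = 1 * (((n:ℝ) + 1) * (n:ℝ)^2) := by ring
  · rintro ⟨k, hk⟩ h0 h1'
    have hn2 : n / 2 = k := by omega
    rw [hn2] at h0 h1'
    set A := Finset.univ.filter (fun i : Fin n => lam i = 0)
    set B := Finset.univ.filter (fun i : Fin n => lam i = 1)
    have hdisj : Disjoint A B := by
      rw [Finset.disjoint_filter]
      intro i _ hi0 hi1
      rw [hi0] at hi1; norm_num at hi1
    have hunion : A ∪ B = Finset.univ := by
      apply Finset.eq_univ_of_card
      rw [Finset.card_union_of_disjoint hdisj, h0, h1', Fintype.card_fin]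
      omega
    have hkS : S = k := by
      rw [hS, ← hunion, Finset.sum_union hdisj]
      have sA : ∑ i ∈ A, lam i = 0 := by
        apply Finset.sum_eq_zero
        intro i hi
        exact (Finset.mem_filter.mp hi).2
      have sB : ∑ i ∈ B, lam i = k := by
        rw [Finset.sum_congr rfl (fun i hi => (Finset.mem_filter.mp hi).2)]
        rw [Finset.sum_const, h1', nsmul_eq_mul, mul_one]
      rw [sA, sB, zero_add]
    have hkQ : Q = k := by
      rw [hQ, ← hunion, Finset.sum_union hdisj]
      have sA : ∑ i ∈ A, lam i ^ 2 = 0 := by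
        apply Finset.sum_eq_zero
        intro i hi
        rw [(Finset.mem_filter.mp hi).2]; ring
      have sB : ∑ i ∈ B, lam i ^ 2 = k := by
        rw [Finset.sum_congr rfl (fun i hi => by
          rw [(Finset.mem_filter.mp hi).2, one_pow] :
          ∀ i ∈ B, lam i ^ 2 = 1)]
        simp [h1']
      rw [sA, sB, zero_add]
    rw [hid, hkS, hkQ]
    have : (n : ℝ) = 2 * k := by rw [hk]; push_cast; ring
    rw [this]; ring
end

section
/- (One-sided Vysochanskii–Petunin inequality) Let X be a real random variable whose law has a density f with respect to Lebesgue measure that is unimodal, i.e., there exists m ∈ ℝ such that f is nondecreasing on (−∞, m] and nonincreasing on [m, ∞). Suppose X has finite mean μ and finite variance σ² > 0. Then for every c ≥ √(5/3) · σ, P(X − μ ≥ c) ≤ (4/9) · σ²/(σ² + c²), and for every c with 0 < c ≤ √(5/3) · σ, P(X − μ ≥ c) ≤ (4/3) · σ²/(σ² + c²) − 1/3. -/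
open MeasureTheory Set

/-- A function monotone on `Iic m` and antitone on `Ici m` is measurable. -/
lemma unimodal_measurable (f : ℝ → ℝ) (m : ℝ)
    (hmono : MonotoneOn f (Set.Iic m)) (hanti : AntitoneOn f (Set.Ici m)) :
    Measurable f := by
  have h1 : Monotone (fun x => f (min x m)) := by
    intro a b hab
    exact hmono (min_le_right a m) (min_le_right b m) (min_le_min hab le_rfl)
  have h2 : Antitone (fun x => f (max x m)) := by
    intro a b hab
    exact hanti (le_max_right a m) (le_max_right b m) (max_le_max hab le_rfl)
  have : f = fun x => if x ≤ m then f (min x m) else f (max x m) := by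
    funext x
    by_cases hx : x ≤ m
    · simp [hx, min_eq_left hx]
    · simp [hx, max_eq_left (le_of_not_ge hx)]
  rw [this]
  exact Measurable.ite measurableSet_Iic h1.measurable h2.measurable

lemma union_Ioo_Ico {m x1 x2 : ℝ} (h1 : m < x1) (h2 : x1 ≤ x2) :
    Set.Ioo m x1 ∪ Set.Ico x1 x2 = Set.Ioo m x2 := by
  ext x
  simp only [Set.mem_union, Set.mem_Ioo, Set.mem_Ico]
  constructor
  · rintro (⟨a, b⟩ | ⟨a, b⟩)
    · exact ⟨a, by linarith⟩
    · exact ⟨by linarith, b⟩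
  · rintro ⟨a, b⟩
    rcases lt_or_ge x x1 with h | h
    · exact Or.inl ⟨a, h⟩
    · exact Or.inr ⟨h, b⟩

lemma union_Ioo_Ici {m x2 : ℝ} (h : m < x2) :
    Set.Ioo m x2 ∪ Set.Ici x2 = Set.Ioi m := by
  ext x
  simp only [Set.mem_union, Set.mem_Ioo, Set.mem_Ici, Set.mem_Ioi]
  constructor
  · rintro (⟨a, _⟩ | a)
    · exact a
    · linarith
  · intro hx
    rcases lt_or_ge x x2 with h' | h'
    · exact Or.inl ⟨hx, h'⟩
    · exact Or.inr h'

lemma union_Ioc_Ioc {a b c : ℝ} (h1 : a ≤ b) (h2 : b ≤ c) :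
    Set.Ioc a b ∪ Set.Ioc b c = Set.Ioc a c := Set.Ioc_union_Ioc_eq_Ioc h1 h2

lemma union_Iic_Ioc {a b : ℝ} (h : a ≤ b) :
    Set.Iic a ∪ Set.Ioc a b = Set.Iic b := by
  ext x
  simp only [Set.mem_union, Set.mem_Iic, Set.mem_Ioc]
  constructor
  · rintro (hx | ⟨_, hx⟩)
    · linarith
    · exact hx
  · intro hx
    rcases le_or_gt x a with h' | h'
    · exact Or.inl h'
    · exact Or.inr ⟨h', hx⟩

/-- Core right lemma: if `g` is nonnegative and antitone on `[m,∞)`, `φ` has sign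
pattern `+,−,+` on `(m,x1), [x1,x2), [x2,∞)` and `∫_{(m,x2)} φ ≥ 0`, then
`∫_{(m,∞)} φ·g ≥ 0`. -/
lemma core_right (g φ : ℝ → ℝ) (m x1 x2 : ℝ) (hm1 : m < x1) (h12 : x1 ≤ x2)
    (hg0 : ∀ x, 0 ≤ g x) (hganti : AntitoneOn g (Set.Ici m))
    (hs1 : ∀ x ∈ Set.Ioo m x1, 0 ≤ φ x)
    (hs2 : ∀ x ∈ Set.Ico x1 x2, φ x ≤ 0)
    (hs3 : ∀ x ∈ Set.Ici x2, 0 ≤ φ x)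
    (hφg : IntegrableOn (fun x => φ x * g x) (Set.Ioi m) volume)
    (hφi : IntegrableOn φ (Set.Ioo m x2) volume)
    (hΦ : 0 ≤ ∫ x in Set.Ioo m x2, φ x) :
    0 ≤ ∫ x in Set.Ioi m, φ x * g x := by
  have hmx2 : m < x2 := lt_of_lt_of_le hm1 h12
  have hsub1 : Set.Ioo m x1 ⊆ Set.Ioo m x2 := Set.Ioo_subset_Ioo le_rfl h12
  have hsub2 : Set.Ico x1 x2 ⊆ Set.Ioo m x2 := fun x hx => ⟨lt_of_lt_of_le hm1 hx.1, hx.2⟩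
  have hsubI : Set.Ioo m x2 ⊆ Set.Ioi m := fun x hx => hx.1
  have hd1 : Disjoint (Set.Ioo m x1) (Set.Ico x1 x2) := by
    rw [Set.disjoint_left]
    rintro x ⟨_, h⟩ ⟨h', _⟩
    exact absurd h' (not_le.2 h)
  have hd2 : Disjoint (Set.Ioo m x2) (Set.Ici x2) := by
    rw [Set.disjoint_left]
    rintro x ⟨_, h⟩ h'
    exact absurd h' (not_le.2 h)
  -- split the φ*g integral over Ioi m
  have hsplit : ∫ x in Set.Ioi m, φ x * g x
      = (∫ x in Set.Ioo m x2, φ x * g x) + ∫ x in Set.Ici x2, φ x * g x := by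
    rw [← union_Ioo_Ici hmx2]
    exact setIntegral_union hd2 measurableSet_Ici
      (hφg.mono_set hsubI) (hφg.mono_set (fun x hx => lt_of_lt_of_le hmx2 hx))
  have hsplit2 : ∫ x in Set.Ioo m x2, φ x * g x
      = (∫ x in Set.Ioo m x1, φ x * g x) + ∫ x in Set.Ico x1 x2, φ x * g x := by
    rw [← union_Ioo_Ico hm1 h12]
    exact setIntegral_union hd1 measurableSet_Ico
      (hφg.mono_set (fun x hx => (hsub1 hx).1)) (hφg.mono_set (fun x hx => (hsub2 hx).1))
  have hsplitφ : ∫ x in Set.Ioo m x2, φ x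
      = (∫ x in Set.Ioo m x1, φ x) + ∫ x in Set.Ico x1 x2, φ x := by
    rw [← union_Ioo_Ico hm1 h12]
    exact setIntegral_union hd1 measurableSet_Ico (hφi.mono_set hsub1) (hφi.mono_set hsub2)
  have hI1 : g x1 * ∫ x in Set.Ioo m x1, φ x ≤ ∫ x in Set.Ioo m x1, φ x * g x := by
    rw [← integral_const_mul]
    apply setIntegral_mono_on ((hφi.mono_set hsub1).const_mul _)
      (hφg.mono_set (fun x hx => (hsub1 hx).1)) measurableSet_Ioo
    intro x hx
    rw [mul_comm]
    exact mul_le_mul_of_nonneg_left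
      (hganti (le_of_lt hx.1) (le_of_lt hm1) (le_of_lt hx.2)) (hs1 x hx)
  have hI2 : g x1 * ∫ x in Set.Ico x1 x2, φ x ≤ ∫ x in Set.Ico x1 x2, φ x * g x := by
    rw [← integral_const_mul]
    apply setIntegral_mono_on ((hφi.mono_set hsub2).const_mul _)
      (hφg.mono_set (fun x hx => (hsub2 hx).1)) measurableSet_Ico
    intro x hx
    rw [mul_comm]
    exact mul_le_mul_of_nonpos_left
      (hganti (le_of_lt hm1) (le_of_lt (lt_of_lt_of_le hm1 hx.1)) hx.1) (hs2 x hx)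
  have h3 : 0 ≤ ∫ x in Set.Ici x2, φ x * g x :=
    setIntegral_nonneg measurableSet_Ici (fun x hx => mul_nonneg (hs3 x hx) (hg0 x))
  have h4 : 0 ≤ g x1 * ∫ x in Set.Ioo m x2, φ x := mul_nonneg (hg0 x1) hΦ
  rw [hsplit, hsplit2]
  rw [hsplitφ, mul_add] at h4
  linarith

/-- Core left lemma: mirror image. -/
lemma core_left (g φ : ℝ → ℝ) (m y1 y2 : ℝ) (hy21 : y2 ≤ y1) (hy1m : y1 ≤ m)
    (hg0 : ∀ x, 0 ≤ g x) (hgmono : MonotoneOn g (Set.Iic m))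
    (hs1 : ∀ x ∈ Set.Ioc y1 m, 0 ≤ φ x)
    (hs2 : ∀ x ∈ Set.Ioc y2 y1, φ x ≤ 0)
    (hs3 : ∀ x ∈ Set.Iic y2, 0 ≤ φ x)
    (hφg : IntegrableOn (fun x => φ x * g x) (Set.Iic m) volume)
    (hφi : IntegrableOn φ (Set.Ioc y2 m) volume)
    (hΦ : 0 ≤ ∫ x in Set.Ioc y2 m, φ x) :
    0 ≤ ∫ x in Set.Iic m, φ x * g x := by
  have hy2m : y2 ≤ m := le_trans hy21 hy1m
  have hsub1 : Set.Ioc y1 m ⊆ Set.Ioc y2 m := Set.Ioc_subset_Ioc hy21 le_rfl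
  have hsub2 : Set.Ioc y2 y1 ⊆ Set.Ioc y2 m := Set.Ioc_subset_Ioc le_rfl hy1m
  have hsubI : Set.Ioc y2 m ⊆ Set.Iic m := fun x hx => hx.2
  have hd1 : Disjoint (Set.Ioc y2 y1) (Set.Ioc y1 m) := by
    rw [Set.disjoint_left]
    rintro x ⟨_, h⟩ ⟨h', _⟩
    exact absurd h (not_le.2 h')
  have hd2 : Disjoint (Set.Iic y2) (Set.Ioc y2 m) := by
    rw [Set.disjoint_left]
    rintro x h ⟨h', _⟩
    exact absurd h (not_le.2 h')
  have hsplit : ∫ x in Set.Iic m, φ x * g x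
      = (∫ x in Set.Iic y2, φ x * g x) + ∫ x in Set.Ioc y2 m, φ x * g x := by
    rw [← union_Iic_Ioc hy2m]
    exact setIntegral_union hd2 measurableSet_Ioc
      (hφg.mono_set (fun x hx => le_trans hx hy2m)) (hφg.mono_set hsubI)
  have hsplit2 : ∫ x in Set.Ioc y2 m, φ x * g x
      = (∫ x in Set.Ioc y2 y1, φ x * g x) + ∫ x in Set.Ioc y1 m, φ x * g x := by
    rw [← union_Ioc_Ioc hy21 hy1m]
    exact setIntegral_union hd1 measurableSet_Ioc
      (hφg.mono_set (fun x hx => (hsub2 hx).2))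
      (hφg.mono_set (fun x hx => hx.2))
  have hsplitφ : ∫ x in Set.Ioc y2 m, φ x
      = (∫ x in Set.Ioc y2 y1, φ x) + ∫ x in Set.Ioc y1 m, φ x := by
    rw [← union_Ioc_Ioc hy21 hy1m]
    exact setIntegral_union hd1 measurableSet_Ioc (hφi.mono_set hsub2) (hφi.mono_set hsub1)
  have hI1 : g y1 * ∫ x in Set.Ioc y1 m, φ x ≤ ∫ x in Set.Ioc y1 m, φ x * g x := by
    rw [← integral_const_mul]
    apply setIntegral_mono_on ((hφi.mono_set hsub1).const_mul _)
      (hφg.mono_set (fun x hx => hx.2)) measurableSet_Ioc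
    intro x hx
    rw [mul_comm]
    exact mul_le_mul_of_nonneg_left (hgmono hy1m hx.2 (le_of_lt hx.1)) (hs1 x hx)
  have hI2 : g y1 * ∫ x in Set.Ioc y2 y1, φ x ≤ ∫ x in Set.Ioc y2 y1, φ x * g x := by
    rw [← integral_const_mul]
    apply setIntegral_mono_on ((hφi.mono_set hsub2).const_mul _)
      (hφg.mono_set (fun x hx => (hsub2 hx).2)) measurableSet_Ioc
    intro x hx
    rw [mul_comm]
    exact mul_le_mul_of_nonpos_left (hgmono (hx.2.trans hy1m) hy1m hx.2) (hs2 x hx)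
  have h3 : 0 ≤ ∫ x in Set.Iic y2, φ x * g x :=
    setIntegral_nonneg measurableSet_Iic (fun x hx => mul_nonneg (hs3 x hx) (hg0 x))
  have h4 : 0 ≤ g y1 * ∫ x in Set.Ioc y2 m, φ x := mul_nonneg (hg0 y1) hΦ
  rw [hsplit, hsplit2]
  rw [hsplitφ, mul_add] at h4
  linarith

/-- Integral of a quadratic over `Ioc`. -/
lemma integral_quad (A C d a b : ℝ) (hab : a ≤ b) :
    ∫ x in Set.Ioc a b, (A * (x - d) ^ 2 + C)
      = A * ((b - d) ^ 3 - (a - d) ^ 3) / 3 + C * (b - a) := by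
  rw [← intervalIntegral.integral_of_le hab]
  have hderiv : ∀ x ∈ Set.uIcc a b,
      HasDerivAt (fun y => A * (y - d) ^ 3 / 3 + C * y) (A * (x - d) ^ 2 + C) x := by
    intro x _
    have h1 : HasDerivAt (fun y : ℝ => y - d) 1 x := (hasDerivAt_id x).sub_const d
    have h2 : HasDerivAt (fun y : ℝ => (y - d) ^ 3) (3 * (x - d) ^ 2 * 1) x := h1.pow 3
    have h3 : HasDerivAt (fun y : ℝ => A * (y - d) ^ 3 / 3) (A * (x - d) ^ 2) x := by
      have h := h2.const_mul (A / 3)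
      have heq : (fun y : ℝ => A / 3 * (y - d) ^ 3) = fun y : ℝ => A * (y - d) ^ 3 / 3 := by
        funext y; ring
      rw [heq] at h
      rw [show A * (x - d) ^ 2 = A / 3 * (3 * (x - d) ^ 2 * 1) by ring]
      exact h
    have h4 : HasDerivAt (fun y : ℝ => C * y) C x := by
      simpa using (hasDerivAt_id x).const_mul C
    exact h3.add h4
  have hcont : IntervalIntegrable (fun x => A * (x - d) ^ 2 + C) volume a b := by
    apply Continuous.intervalIntegrable
    continuity
  rw [intervalIntegral.integral_eq_sub_of_hasDerivAt hderiv hcont]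
  ring

/-- Integral of the indicator of `Ici T` over `Ioc a b` when `a ≤ T ≤ b`. -/
lemma integral_ind (T a b : ℝ) (haT : a ≤ T) (hTb : T ≤ b) :
    ∫ x in Set.Ioc a b, Set.indicator (Set.Ici T) (fun _ => (1 : ℝ)) x = b - T := by
  rw [integral_indicator measurableSet_Ici,
    Measure.restrict_restrict measurableSet_Ici, setIntegral_const]
  have h1 : volume (Set.Ici T ∩ Set.Ioc a b) = ENNReal.ofReal (b - T) := by
    apply le_antisymm
    · calc volume (Set.Ici T ∩ Set.Ioc a b) ≤ volume (Set.Icc T b) :=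
            measure_mono (fun x hx => ⟨hx.1, hx.2.2⟩)
      _ = ENNReal.ofReal (b - T) := Real.volume_Icc
    · calc ENNReal.ofReal (b - T) = volume (Set.Ioc T b) := Real.volume_Ioc.symm
      _ ≤ volume (Set.Ici T ∩ Set.Ioc a b) :=
            measure_mono (fun x hx => ⟨le_of_lt hx.1, lt_of_le_of_lt haT hx.1, hx.2⟩)
  rw [measureReal_def, h1, ENNReal.toReal_ofReal (by linarith), smul_eq_mul, mul_one]
/-- Master certificate lemma: if the quadratic `p x = A(x-(μ-u))² + C` dominates the
indicator of `Ici T` in averaged form on intervals anchored at the mode `m` (expressed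
through sign patterns and two integral inequalities), then
`law (Ici T) ≤ A(σ² + u²) + C`. -/
lemma master
    (law : Measure ℝ) [IsProbabilityMeasure law] (f : ℝ → ℝ) (m : ℝ)
    (hdens : law = volume.withDensity (fun x => ENNReal.ofReal (f x)))
    (hmono : MonotoneOn f (Set.Iic m)) (hanti : AntitoneOn f (Set.Ici m))
    (μ σ u : ℝ)
    (hint : Integrable (fun x => x) law) (hμ : μ = ∫ x, x ∂law)
    (hint2 : Integrable (fun x => (x - μ) ^ 2) law)
    (hσ : σ ^ 2 = ∫ x, (x - μ) ^ 2 ∂law)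
    (A C T x1 x2 y1 y2 : ℝ)
    (hm1 : m < x1) (h12 : x1 ≤ x2) (hy21 : y2 ≤ y1) (hy1m : y1 ≤ m)
    (hr1 : ∀ x ∈ Set.Ioo m x1,
      0 ≤ A * (x - (μ - u)) ^ 2 + C - (Set.Ici T).indicator (fun _ => (1:ℝ)) x)
    (hr2 : ∀ x ∈ Set.Ico x1 x2,
      A * (x - (μ - u)) ^ 2 + C - (Set.Ici T).indicator (fun _ => (1:ℝ)) x ≤ 0)
    (hr3 : ∀ x ∈ Set.Ici x2,
      0 ≤ A * (x - (μ - u)) ^ 2 + C - (Set.Ici T).indicator (fun _ => (1:ℝ)) x)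
    (hl1 : ∀ x ∈ Set.Ioc y1 m,
      0 ≤ A * (x - (μ - u)) ^ 2 + C - (Set.Ici T).indicator (fun _ => (1:ℝ)) x)
    (hl2 : ∀ x ∈ Set.Ioc y2 y1,
      A * (x - (μ - u)) ^ 2 + C - (Set.Ici T).indicator (fun _ => (1:ℝ)) x ≤ 0)
    (hl3 : ∀ x ∈ Set.Iic y2,
      0 ≤ A * (x - (μ - u)) ^ 2 + C - (Set.Ici T).indicator (fun _ => (1:ℝ)) x)
    (hΦr : 0 ≤ ∫ x in Set.Ioo m x2,
      (A * (x - (μ - u)) ^ 2 + C - (Set.Ici T).indicator (fun _ => (1:ℝ)) x))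
    (hΦl : 0 ≤ ∫ x in Set.Ioc y2 m,
      (A * (x - (μ - u)) ^ 2 + C - (Set.Ici T).indicator (fun _ => (1:ℝ)) x)) :
    (law (Set.Ici T)).toReal ≤ A * (σ ^ 2 + u ^ 2) + C := by
  set δ : ℝ := μ - u with hδ
  set p : ℝ → ℝ := fun x => A * (x - δ) ^ 2 + C with hp
  set χ : ℝ → ℝ := (Set.Ici T).indicator (fun _ => (1:ℝ)) with hχ
  set φ : ℝ → ℝ := fun x => p x - χ x with hφ
  have hfmeas : Measurable f := unimodal_measurable f m hmono hanti
  have hdme : Measurable (fun x => ENNReal.ofReal (f x)) :=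
    ENNReal.measurable_ofReal.comp hfmeas
  set g : ℝ → ℝ := fun x => max (f x) 0 with hg
  have hg0 : ∀ x, 0 ≤ g x := fun x => le_max_right _ _
  have hganti : AntitoneOn g (Set.Ici m) := fun a ha b hb hab =>
    max_le_max (hanti ha hb hab) le_rfl
  have hgmono : MonotoneOn g (Set.Iic m) := fun a ha b hb hab =>
    max_le_max (hmono ha hb hab) le_rfl
  have htoReal : (fun x => (ENNReal.ofReal (f x)).toReal) = g := by
    funext x
    exact ENNReal.toReal_ofReal'
  -- transfer integrability between law and volume
  have hintlaw : ∀ h : ℝ → ℝ, Integrable h law → Integrable (fun x => h x * g x) volume := by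
    intro h hh
    rw [hdens, integrable_withDensity_iff hdme
      (Filter.Eventually.of_forall fun x => ENNReal.ofReal_lt_top)] at hh
    have : (fun x => h x * (ENNReal.ofReal (f x)).toReal) = fun x => h x * g x := by
      funext x
      rw [ENNReal.toReal_ofReal']
    rwa [this] at hh
  -- integrability of p and χ with respect to law
  have hsubμ : Integrable (fun x => x - μ) law := hint.sub (integrable_const μ)
  have hexp : p = fun x => A * (x - μ) ^ 2 + (2 * A * u) * (x - μ) + (A * u ^ 2 + C) := by
    funext x
    simp only [hp, hδ]
    ring
  have hp_law : Integrable p law := by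
    rw [hexp]
    exact ((hint2.const_mul A).add (hsubμ.const_mul (2 * A * u))).add (integrable_const _)
  have hχ_law : Integrable χ law := (integrable_const (1:ℝ)).indicator measurableSet_Ici
  have hφ_law : Integrable φ law := hp_law.sub hχ_law
  have hφg : Integrable (fun x => φ x * g x) volume := hintlaw φ hφ_law
  -- local integrability of φ on bounded intervals
  have hpcont : Continuous p := by
    simp only [hp]
    exact (continuous_const.mul ((continuous_id.sub continuous_const).pow 2)).add
      continuous_const
  have hφloc : ∀ a b : ℝ, IntegrableOn φ (Set.Ioc a b) volume := by
    intro a b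
    apply Integrable.sub
    · exact hpcont.integrableOn_Ioc
    · exact Integrable.indicator (integrableOn_const measure_Ioc_lt_top.ne)
        measurableSet_Ici
  have hR : 0 ≤ ∫ x in Set.Ioi m, φ x * g x := by
    apply core_right g φ m x1 x2 hm1 h12 hg0 hganti hr1 hr2 hr3 hφg.integrableOn
      ((hφloc m x2).mono_set Set.Ioo_subset_Ioc_self)
    exact hΦr
  have hL : 0 ≤ ∫ x in Set.Iic m, φ x * g x := by
    apply core_left g φ m y1 y2 hy21 hy1m hg0 hgmono hl1 hl2 hl3 hφg.integrableOn
      (hφloc y2 m)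
    exact hΦl
  have hsplitall : ∫ x, φ x * g x
      = (∫ x in Set.Iic m, φ x * g x) + ∫ x in Set.Ioi m, φ x * g x := by
    rw [← setIntegral_univ, ← Set.Iic_union_Ioi (a := m),
      setIntegral_union (Set.Iic_disjoint_Ioi le_rfl) measurableSet_Ioi
        hφg.integrableOn hφg.integrableOn]
  have hφvol : 0 ≤ ∫ x, φ x * g x := by
    rw [hsplitall]; linarith
  -- transfer the integral
  have hfnn : Measurable (fun x => Real.toNNReal (f x)) := hfmeas.real_toNNReal
  have hlaw_int : ∫ x, φ x ∂law = ∫ x, φ x * g x := by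
    rw [hdens]
    have hcoe : (fun x => ENNReal.ofReal (f x))
        = fun x => ((Real.toNNReal (f x) : NNReal) : ENNReal) := rfl
    rw [hcoe, integral_withDensity_eq_integral_smul hfnn]
    congr 1
    funext x
    rw [NNReal.smul_def, smul_eq_mul, Real.coe_toNNReal', mul_comm]
  have h5 : 0 ≤ ∫ x, φ x ∂law := by rw [hlaw_int]; exact hφvol
  have h6 : ∫ x, φ x ∂law = (∫ x, p x ∂law) - ∫ x, χ x ∂law := integral_sub hp_law hχ_law
  have h7 : ∫ x, χ x ∂law = (law (Set.Ici T)).toReal := by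
    rw [hχ, integral_indicator measurableSet_Ici, setIntegral_const, smul_eq_mul, mul_one, measureReal_def]
  have hmean : ∫ x, (x - μ) ∂law = 0 := by
    rw [integral_sub hint (integrable_const μ), integral_const]
    simp [← hμ]
  have h8 : ∫ x, p x ∂law = A * (σ ^ 2 + u ^ 2) + C := by
    have hi1 : Integrable (fun x => A * (x - μ) ^ 2) law := by
      exact hint2.const_mul A
    have hi2 : Integrable (fun x : ℝ => 2 * A * u * (x - μ) + (A * u ^ 2 + C)) law := by
      exact (hsubμ.const_mul _).add (integrable_const _)
    have e1 : ∫ x, A * (x - μ) ^ 2 ∂law = A * σ ^ 2 := by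
      rw [integral_const_mul, ← hσ]
    have e2 : ∫ x, (2 * A * u * (x - μ) + (A * u ^ 2 + C)) ∂law = A * u ^ 2 + C := by
      rw [integral_add (hsubμ.const_mul _) (integrable_const _), integral_const_mul, hmean,
        integral_const]
      simp
    calc ∫ x, p x ∂law
        = ∫ x, (A * (x - μ) ^ 2 + (2 * A * u * (x - μ) + (A * u ^ 2 + C))) ∂law := by
          rw [hp]
          congr 1
          funext x
          simp only [hδ]
          ring
      _ = (∫ x, A * (x - μ) ^ 2 ∂law)
            + ∫ x, (2 * A * u * (x - μ) + (A * u ^ 2 + C)) ∂law := by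
          exact integral_add hi1 hi2
      _ = A * (σ ^ 2 + u ^ 2) + C := by
          rw [e1, e2]
          ring
  rw [← h7]
  rw [h6, h8] at h5
  linarith
/-- Integral of quadratic minus indicator, when the indicator threshold is inside. -/
lemma integral_phi (A C d T a b : ℝ) (hab : a ≤ b) (haT : a ≤ T) (hTb : T ≤ b) :
    ∫ x in Set.Ioc a b,
        (A * (x - d) ^ 2 + C - (Set.Ici T).indicator (fun _ => (1:ℝ)) x)
      = A * ((b - d) ^ 3 - (a - d) ^ 3) / 3 + C * (b - a) - (b - T) := by
  have h1 : IntegrableOn (fun x => A * (x - d) ^ 2 + C) (Set.Ioc a b) volume := by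
    apply Continuous.integrableOn_Ioc
    exact (continuous_const.mul ((continuous_id.sub continuous_const).pow 2)).add
      continuous_const
  have h2 : IntegrableOn ((Set.Ici T).indicator (fun _ => (1:ℝ))) (Set.Ioc a b) volume :=
    Integrable.indicator (integrableOn_const measure_Ioc_lt_top.ne) measurableSet_Ici
  rw [integral_sub h1 h2, integral_quad A C d a b hab, integral_ind T a b haT hTb]

/-- Integral of quadratic minus indicator, when the indicator vanishes on the interval. -/
lemma integral_phi0 (A C d T a b : ℝ) (hab : a ≤ b) (hbT : b < T) :
    ∫ x in Set.Ioc a b,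
        (A * (x - d) ^ 2 + C - (Set.Ici T).indicator (fun _ => (1:ℝ)) x)
      = A * ((b - d) ^ 3 - (a - d) ^ 3) / 3 + C * (b - a) := by
  have heq : Set.EqOn (fun x => A * (x - d) ^ 2 + C - (Set.Ici T).indicator (fun _ => (1:ℝ)) x)
      (fun x => A * (x - d) ^ 2 + C) (Set.Ioc a b) := by
    intro x hx
    simp only
    rw [Set.indicator_of_notMem (by simp only [Set.mem_Ici, not_le]; linarith [hx.2])]
    ring
  rw [setIntegral_congr_fun measurableSet_Ioc heq, integral_quad A C d a b hab]

/-- Case A: mode `m` at or left of the centering point `μ - u`. -/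
lemma caseA
    (law : Measure ℝ) [IsProbabilityMeasure law] (f : ℝ → ℝ) (m : ℝ)
    (hdens : law = volume.withDensity (fun x => ENNReal.ofReal (f x)))
    (hmono : MonotoneOn f (Set.Iic m)) (hanti : AntitoneOn f (Set.Ici m))
    (μ σ u r : ℝ)
    (hint : Integrable (fun x => x) law) (hμ : μ = ∫ x, x ∂law)
    (hint2 : Integrable (fun x => (x - μ) ^ 2) law)
    (hσ : σ ^ 2 = ∫ x, (x - μ) ^ 2 ∂law)
    (hu : 0 < u) (hur : u < r) (hσur : σ ^ 2 + u ^ 2 = u * r)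
    (hw : m ≤ μ - u) :
    (law (Set.Ici (μ - u + r))).toReal ≤ 4 * u / (9 * r) := by
  have hr : 0 < r := lt_trans hu hur
  have hA0 : (0:ℝ) < 4 / (9 * r ^ 2) := by positivity
  have hAone : 4 / (9 * r ^ 2) * (3/2 * r) ^ 2 = 1 := by field_simp; ring
  have hmT : m < μ - u + r := by linarith
  have hTx2 : μ - u + r ≤ μ - u + 3/2 * r := by linarith
  have hr1 : ∀ x ∈ Set.Ioo m (μ - u + r),
      0 ≤ 4 / (9 * r ^ 2) * (x - (μ - u)) ^ 2 + 0
        - (Set.Ici (μ - u + r)).indicator (fun _ => (1:ℝ)) x := by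
    intro x hx
    rw [Set.indicator_of_notMem (by simp only [Set.mem_Ici, not_le]; exact hx.2)]
    nlinarith [mul_nonneg (le_of_lt hA0) (sq_nonneg (x - (μ - u)))]
  have hr2 : ∀ x ∈ Set.Ico (μ - u + r) (μ - u + 3/2 * r),
      4 / (9 * r ^ 2) * (x - (μ - u)) ^ 2 + 0
        - (Set.Ici (μ - u + r)).indicator (fun _ => (1:ℝ)) x ≤ 0 := by
    intro x hx
    rw [Set.indicator_of_mem (Set.mem_Ici.2 hx.1)]
    have h1 : x < μ - u + 3/2 * r := hx.2
    have h2 : μ - u + r ≤ x := hx.1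
    have h3 : (x - (μ - u)) ^ 2 ≤ (3/2 * r) ^ 2 := by nlinarith
    linarith [mul_le_mul_of_nonneg_left h3 (le_of_lt hA0), hAone]
  have hr3 : ∀ x ∈ Set.Ici (μ - u + 3/2 * r),
      0 ≤ 4 / (9 * r ^ 2) * (x - (μ - u)) ^ 2 + 0
        - (Set.Ici (μ - u + r)).indicator (fun _ => (1:ℝ)) x := by
    intro x hx
    have hx0 : μ - u + 3/2 * r ≤ x := hx
    rw [Set.indicator_of_mem (Set.mem_Ici.2 (by linarith))]
    have h3 : (3/2 * r) ^ 2 ≤ (x - (μ - u)) ^ 2 := by nlinarith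
    linarith [mul_le_mul_of_nonneg_left h3 (le_of_lt hA0), hAone]
  have hlpt : ∀ x ≤ m,
      0 ≤ 4 / (9 * r ^ 2) * (x - (μ - u)) ^ 2 + 0
        - (Set.Ici (μ - u + r)).indicator (fun _ => (1:ℝ)) x := by
    intro x hx
    rw [Set.indicator_of_notMem (by simp only [Set.mem_Ici, not_le]; linarith)]
    nlinarith [mul_nonneg (le_of_lt hA0) (sq_nonneg (x - (μ - u)))]
  have hΦr : 0 ≤ ∫ x in Set.Ioo m (μ - u + 3/2 * r),
      (4 / (9 * r ^ 2) * (x - (μ - u)) ^ 2 + 0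
        - (Set.Ici (μ - u + r)).indicator (fun _ => (1:ℝ)) x) := by
    rw [← integral_Ioc_eq_integral_Ioo,
      integral_phi (4 / (9 * r ^ 2)) 0 (μ - u) (μ - u + r) m (μ - u + 3/2 * r)
        (by linarith) (by linarith) (by linarith)]
    have hc : 4 / (9 * r ^ 2) * ((μ - u + 3/2 * r - (μ - u)) ^ 3 - (m - (μ - u)) ^ 3) / 3
          + 0 * (μ - u + 3/2 * r - m) - (μ - u + 3/2 * r - (μ - u + r))
        = 4 / (27 * r ^ 2) * (μ - u - m) ^ 3 := by
      field_simp
      ring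
    rw [hc]
    exact mul_nonneg (by positivity) (pow_nonneg (by linarith) 3)
  have hΦl : 0 ≤ ∫ x in Set.Ioc (m-1) m,
      (4 / (9 * r ^ 2) * (x - (μ - u)) ^ 2 + 0
        - (Set.Ici (μ - u + r)).indicator (fun _ => (1:ℝ)) x) := by
    apply setIntegral_nonneg measurableSet_Ioc
    intro x hx
    exact hlpt x hx.2
  have key := master law f m hdens hmono hanti μ σ u hint hμ hint2 hσ
    (4 / (9 * r ^ 2)) 0 (μ - u + r) (μ - u + r) (μ - u + 3/2 * r)
    (m-1) (m-1) hmT hTx2 le_rfl (by linarith) hr1 hr2 hr3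
    (fun x hx => hlpt x hx.2)
    (fun x hx => absurd hx (by simp))
    (fun x hx => hlpt x (le_trans hx (by linarith)))
    hΦr hΦl
  have hval : 4 / (9 * r ^ 2) * (σ ^ 2 + u ^ 2) + 0 = 4 * u / (9 * r) := by
    rw [hσur]
    field_simp
    ring
  linarith
/-- Case C: mode `m` at or right of the threshold `μ - u + r`. -/
lemma caseC
    (law : Measure ℝ) [IsProbabilityMeasure law] (f : ℝ → ℝ) (m : ℝ)
    (hdens : law = volume.withDensity (fun x => ENNReal.ofReal (f x)))
    (hmono : MonotoneOn f (Set.Iic m)) (hanti : AntitoneOn f (Set.Ici m))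
    (μ σ u r : ℝ)
    (hint : Integrable (fun x => x) law) (hμ : μ = ∫ x, x ∂law)
    (hint2 : Integrable (fun x => (x - μ) ^ 2) law)
    (hσ : σ ^ 2 = ∫ x, (x - μ) ^ 2 ∂law)
    (hu : 0 < u) (hur : u < r) (hσur : σ ^ 2 + u ^ 2 = u * r)
    (hw : μ - u + r ≤ m) :
    (law (Set.Ici (μ - u + r))).toReal ≤ 4 * u / (3 * r) - 1/3 := by
  have hr : 0 < r := lt_trans hu hur
  have hA0 : (0:ℝ) < 4 / (3 * r ^ 2) := by positivity
  have hrpt : ∀ x, m < x →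
      0 ≤ 4 / (3 * r ^ 2) * (x - (μ - u)) ^ 2 + (-1/3)
        - (Set.Ici (μ - u + r)).indicator (fun _ => (1:ℝ)) x := by
    intro x hx
    rw [Set.indicator_of_mem (Set.mem_Ici.2 (by linarith))]
    have h2 : r ≤ x - (μ - u) := by linarith
    have h3 : r ^ 2 ≤ (x - (μ - u)) ^ 2 := by nlinarith
    have h4 : 4 / (3 * r ^ 2) * r ^ 2 ≤ 4 / (3 * r ^ 2) * (x - (μ - u)) ^ 2 :=
      mul_le_mul_of_nonneg_left h3 (le_of_lt hA0)
    have h5 : 4 / (3 * r ^ 2) * r ^ 2 = 4/3 := by field_simp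
    linarith
  have hl1 : ∀ x ∈ Set.Ioc (μ - u + r/2) m,
      0 ≤ 4 / (3 * r ^ 2) * (x - (μ - u)) ^ 2 + (-1/3)
        - (Set.Ici (μ - u + r)).indicator (fun _ => (1:ℝ)) x := by
    intro x hx
    by_cases hxT : μ - u + r ≤ x
    · rw [Set.indicator_of_mem (Set.mem_Ici.2 hxT)]
      have h3 : r ^ 2 ≤ (x - (μ - u)) ^ 2 := by nlinarith
      have h4 : 4 / (3 * r ^ 2) * r ^ 2 ≤ 4 / (3 * r ^ 2) * (x - (μ - u)) ^ 2 :=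
        mul_le_mul_of_nonneg_left h3 (le_of_lt hA0)
      have h5 : 4 / (3 * r ^ 2) * r ^ 2 = 4/3 := by field_simp
      linarith
    · rw [Set.indicator_of_notMem (by simp only [Set.mem_Ici, not_le]; linarith)]
      have h2 : r/2 < x - (μ - u) := by linarith [hx.1]
      have h3 : (r/2) ^ 2 ≤ (x - (μ - u)) ^ 2 := by nlinarith
      have h4 : 4 / (3 * r ^ 2) * (r/2) ^ 2 ≤ 4 / (3 * r ^ 2) * (x - (μ - u)) ^ 2 :=
        mul_le_mul_of_nonneg_left h3 (le_of_lt hA0)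
      have h5 : 4 / (3 * r ^ 2) * (r/2) ^ 2 = 1/3 := by field_simp; ring
      linarith
  have hl2 : ∀ x ∈ Set.Ioc (μ - u - r/2) (μ - u + r/2),
      4 / (3 * r ^ 2) * (x - (μ - u)) ^ 2 + (-1/3)
        - (Set.Ici (μ - u + r)).indicator (fun _ => (1:ℝ)) x ≤ 0 := by
    intro x hx
    rw [Set.indicator_of_notMem (by simp only [Set.mem_Ici, not_le]; linarith [hx.2])]
    have h3 : (x - (μ - u)) ^ 2 ≤ (r/2) ^ 2 := by nlinarith [hx.1, hx.2]
    have h4 : 4 / (3 * r ^ 2) * (x - (μ - u)) ^ 2 ≤ 4 / (3 * r ^ 2) * (r/2) ^ 2 :=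
      mul_le_mul_of_nonneg_left h3 (le_of_lt hA0)
    have h5 : 4 / (3 * r ^ 2) * (r/2) ^ 2 = 1/3 := by field_simp; ring
    linarith
  have hl3 : ∀ x ∈ Set.Iic (μ - u - r/2),
      0 ≤ 4 / (3 * r ^ 2) * (x - (μ - u)) ^ 2 + (-1/3)
        - (Set.Ici (μ - u + r)).indicator (fun _ => (1:ℝ)) x := by
    intro x hx
    have hx' : x ≤ μ - u - r/2 := hx
    rw [Set.indicator_of_notMem (by simp only [Set.mem_Ici, not_le]; linarith)]
    have h3 : (r/2) ^ 2 ≤ (x - (μ - u)) ^ 2 := by nlinarith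
    have h4 : 4 / (3 * r ^ 2) * (r/2) ^ 2 ≤ 4 / (3 * r ^ 2) * (x - (μ - u)) ^ 2 :=
      mul_le_mul_of_nonneg_left h3 (le_of_lt hA0)
    have h5 : 4 / (3 * r ^ 2) * (r/2) ^ 2 = 1/3 := by field_simp; ring
    linarith
  have hΦr : 0 ≤ ∫ x in Set.Ioo m (m + 1),
      (4 / (3 * r ^ 2) * (x - (μ - u)) ^ 2 + (-1/3)
        - (Set.Ici (μ - u + r)).indicator (fun _ => (1:ℝ)) x) := by
    apply setIntegral_nonneg measurableSet_Ioo
    intro x hx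
    exact hrpt x hx.1
  have hΦl : 0 ≤ ∫ x in Set.Ioc (μ - u - r/2) m,
      (4 / (3 * r ^ 2) * (x - (μ - u)) ^ 2 + (-1/3)
        - (Set.Ici (μ - u + r)).indicator (fun _ => (1:ℝ)) x) := by
    rw [integral_phi (4 / (3 * r ^ 2)) (-1/3) (μ - u) (μ - u + r) (μ - u - r/2) m
      (by linarith) (by linarith) hw]
    have hc : 4 / (3 * r ^ 2) * ((m - (μ - u)) ^ 3 - (μ - u - r/2 - (μ - u)) ^ 3) / 3
          + (-1/3) * (m - (μ - u - r/2)) - (m - (μ - u + r))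
        = 4 / (9 * r ^ 2) * ((m - (μ - u) - r) ^ 2 * ((m - (μ - u)) + 2*r)) := by
      field_simp
      ring
    rw [hc]
    apply mul_nonneg (by positivity)
    apply mul_nonneg (sq_nonneg _)
    nlinarith
  have key := master law f m hdens hmono hanti μ σ u hint hμ hint2 hσ
    (4 / (3 * r ^ 2)) (-1/3) (μ - u + r) (m + 1) (m + 1)
    (μ - u + r/2) (μ - u - r/2)
    (by linarith) le_rfl (by linarith) (by linarith)
    (fun x hx => hrpt x hx.1)
    (fun x hx => absurd hx (by simp))
    (fun x hx => hrpt x (by linarith [Set.mem_Ici.1 hx]))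
    hl1 hl2 hl3 hΦr hΦl
  have hval : 4 / (3 * r ^ 2) * (σ ^ 2 + u ^ 2) + (-1/3) = 4 * u / (3 * r) - 1/3 := by
    rw [hσur]
    field_simp
    ring
  linarith
/-- Existence of the tangency point `e2` for case B. -/
lemma e2_exists (r w : ℝ) (hr : 0 < r) (hw0 : 0 ≤ w) (hwr : w < r) :
    ∃ e2 : ℝ, r ≤ e2 ∧ 4*e2^2 - (6*r+2*w)*e2 + (3*r*w + w^2) = 0 := by
  have harg : (0:ℝ) ≤ 3*(3*r+w)*(r-w) := by nlinarith
  have hss : (Real.sqrt (3*(3*r+w)*(r-w)))^2 = 3*(3*r+w)*(r-w) := Real.sq_sqrt harg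
  have hs0 := Real.sqrt_nonneg (3*(3*r+w)*(r-w))
  refine ⟨(3*r + w + Real.sqrt (3*(3*r+w)*(r-w)))/4, ?_, ?_⟩
  · by_contra hcon
    push_neg at hcon
    have h1 : Real.sqrt (3*(3*r+w)*(r-w)) < r - w := by linarith
    have h2 : (Real.sqrt (3*(3*r+w)*(r-w)))^2 < (r-w)^2 := by nlinarith
    nlinarith
  · linear_combination (1/4) * hss

/-- Value bound for case B, branch 1. -/
lemma valB1 (u r w e2 κ : ℝ) (hu : 0 < u) (hur : u < r) (hw0 : 0 ≤ w) (hwr : w < r)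
    (he2r : r ≤ e2) (hQ : 4*e2^2 - (6*r+2*w)*e2 + (3*r*w + w^2) = 0)
    (hκ : κ = 4/(12*e2^2 - 3*w^2)) (hbr : 8*u ≤ 3*r) :
    3*κ*(u*r) - 3*κ*w^2/4 ≤ 4*u/(9*r) := by
  have hr : 0 < r := lt_trans hu hur
  have hden : 0 < 12*e2^2 - 3*w^2 := by nlinarith
  have hs0 : 0 ≤ 4*e2 - 3*r - w := by linarith
  have hss : (4*e2 - 3*r - w)^2 = 3*(3*r+w)*(r-w) := by linear_combination 4*hQ
  have hN : ((3*r+w)*(4*e2-3*r-w))^2 - (9*(r^2 - w^2))^2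
      = 3*(r-w)*(w^2*(36*r+28*w)) := by linear_combination (3*r+w)^2 * hss
  have hNpos : 0 ≤ 3*(r-w)*(w^2*(36*r+28*w)) :=
    mul_nonneg (by linarith) (mul_nonneg (sq_nonneg w) (by linarith))
  have key : 9*(r^2 - w^2) ≤ (3*r+w)*(4*e2-3*r-w) := by
    rcases le_or_gt (9*(r^2 - w^2)) 0 with h | h
    · have h0 : 0 ≤ (3*r+w)*(4*e2-3*r-w) := mul_nonneg (by linarith) hs0
      linarith
    · by_contra hcon
      push_neg at hcon
      have h3 : 0 < (9*(r^2-w^2) - (3*r+w)*(4*e2-3*r-w))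
          * (9*(r^2-w^2) + (3*r+w)*(4*e2-3*r-w)) := by
        apply mul_pos (by linarith)
        have h0 : 0 ≤ (3*r+w)*(4*e2-3*r-w) := mul_nonneg (by linarith) hs0
        linarith
      nlinarith [hN, h3, hNpos]
  have h16 : 16*e2^2 = 18*r^2 - 2*w^2 + 2*(3*r+w)*(4*e2-3*r-w) := by
    linear_combination 4*hQ
  have hLHS : 3*κ*(u*r) - 3*κ*w^2/4 = (12*u*r - 3*w^2)/(12*e2^2 - 3*w^2) := by
    rw [hκ]
    field_simp
    ring
  rw [hLHS, div_le_div_iff₀ hden (by positivity : (0:ℝ) < 9*r)]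
  have h16u : 48*u*e2^2 = 54*u*r^2 - 6*u*w^2 + 6*u*((3*r+w)*(4*e2-3*r-w)) := by
    linear_combination 3*u*h16
  have keymul : 6*u*(9*(r^2 - w^2)) ≤ 6*u*((3*r+w)*(4*e2-3*r-w)) :=
    mul_le_mul_of_nonneg_left key (by linarith)
  have hwsq : 0 ≤ w^2*(27*r - 72*u) := mul_nonneg (sq_nonneg w) (by linarith)
  linarith [h16u, keymul, hwsq]

/-- Value bound for case B, branch 2. -/
lemma valB2 (u r w e2 κ : ℝ) (hu : 0 < u) (hur : u < r) (hw0 : 0 ≤ w) (hwr : w < r)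
    (he2r : r ≤ e2) (hQ : 4*e2^2 - (6*r+2*w)*e2 + (3*r*w + w^2) = 0)
    (hκ : κ = 4/(12*e2^2 - 3*w^2)) (hbr : 3*r ≤ 8*u) :
    3*κ*(u*r) - 3*κ*w^2/4 ≤ 4*u/(3*r) - 1/3 := by
  have hr : 0 < r := lt_trans hu hur
  have hden : 0 < 12*e2^2 - 3*w^2 := by nlinarith
  have hs0 : 0 ≤ 4*e2 - 3*r - w := by linarith
  have hss : (4*e2 - 3*r - w)^2 = 3*(3*r+w)*(r-w) := by linear_combination 4*hQ
  have hN : ((3*r+w)*(4*e2-3*r-w))^2 - (9*(r^2 - w^2))^2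
      = 3*(r-w)*(w^2*(36*r+28*w)) := by linear_combination (3*r+w)^2 * hss
  have hNpos : 0 ≤ 3*(r-w)*(w^2*(36*r+28*w)) :=
    mul_nonneg (by linarith) (mul_nonneg (sq_nonneg w) (by linarith))
  have key : 9*(r^2 - w^2) ≤ (3*r+w)*(4*e2-3*r-w) := by
    rcases le_or_gt (9*(r^2 - w^2)) 0 with h | h
    · have h0 : 0 ≤ (3*r+w)*(4*e2-3*r-w) := mul_nonneg (by linarith) hs0
      linarith
    · by_contra hcon
      push_neg at hcon
      have h3 : 0 < (9*(r^2-w^2) - (3*r+w)*(4*e2-3*r-w))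
          * (9*(r^2-w^2) + (3*r+w)*(4*e2-3*r-w)) := by
        apply mul_pos (by linarith)
        have h0 : 0 ≤ (3*r+w)*(4*e2-3*r-w) := mul_nonneg (by linarith) hs0
        linarith
      nlinarith [hN, h3, hNpos]
  have h16 : 16*e2^2 = 18*r^2 - 2*w^2 + 2*(3*r+w)*(4*e2-3*r-w) := by
    linear_combination 4*hQ
  have hLHS : 3*κ*(u*r) - 3*κ*w^2/4 = (12*u*r - 3*w^2)/(12*e2^2 - 3*w^2) := by
    rw [hκ]
    field_simp
    ring
  have hRHS : 4*u/(3*r) - 1/3 = (4*u - r)/(3*r) := by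
    field_simp
  rw [hLHS, hRHS, div_le_div_iff₀ hden (by positivity : (0:ℝ) < 3*r)]
  have h4ur : 0 < 4*u - r := by linarith
  have hA : (4*u - r)*(12*e2^2 - 3*w^2)
      = (4*u - r)*(27/2*r^2 - 9/2*w^2 + 3/2*((3*r+w)*(4*e2-3*r-w))) := by
    linear_combination (3*(4*u - r))*hQ
  have keymul : (3/2*(4*u-r))*(9*(r^2 - w^2)) ≤ (3/2*(4*u-r))*((3*r+w)*(4*e2-3*r-w)) :=
    mul_le_mul_of_nonneg_left key (by linarith)
  have hwfac : 0 ≤ 9*(8*u - 3*r)*(r^2 - w^2) := by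
    apply mul_nonneg (by linarith)
    nlinarith
  linarith [hA, keymul, hwfac]
set_option maxHeartbeats 1000000 in
/-- Case B core: mode offset `w ∈ [0, r)`, certificate `q(z) = 3κ(z² - w²/4)`. -/
lemma caseB_core
    (law : Measure ℝ) [IsProbabilityMeasure law] (f : ℝ → ℝ) (m : ℝ)
    (hdens : law = volume.withDensity (fun x => ENNReal.ofReal (f x)))
    (hmono : MonotoneOn f (Set.Iic m)) (hanti : AntitoneOn f (Set.Ici m))
    (μ σ u r : ℝ)
    (hint : Integrable (fun x => x) law) (hμ : μ = ∫ x, x ∂law)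
    (hint2 : Integrable (fun x => (x - μ) ^ 2) law)
    (hσ : σ ^ 2 = ∫ x, (x - μ) ^ 2 ∂law)
    (hu : 0 < u) (hur : u < r) (hσur : σ ^ 2 + u ^ 2 = u * r)
    (w e2 κ : ℝ) (hw : m = μ - u + w) (hw0 : 0 ≤ w) (hwr : w < r)
    (he2r : r ≤ e2)
    (hQ : 4*e2^2 - (6*r+2*w)*e2 + (3*r*w + w^2) = 0)
    (hκ : κ = 4/(12*e2^2 - 3*w^2)) :
    (law (Set.Ici (μ - u + r))).toReal ≤ 3*κ*(u*r) - 3*κ*w^2/4 := by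
  subst hw
  have hr : 0 < r := lt_trans hu hur
  have hden : 0 < 12*e2^2 - 3*w^2 := by nlinarith
  have hκ0 : 0 < κ := by rw [hκ]; positivity
  have hone : 3*κ*e2^2 - 3*κ*w^2/4 = 1 := by
    rw [hκ]
    field_simp
    ring
  have hcubic : 8*e2^3 - 12*r*e2^2 + 3*r*w^2 + w^3 = 0 := by
    linear_combination (2*e2 + w)*hQ
  have hr1 : ∀ x ∈ Set.Ioo (μ - u + w) (μ - u + r),
      0 ≤ 3*κ * (x - (μ - u)) ^ 2 + (-(3*κ*w^2/4))
        - (Set.Ici (μ - u + r)).indicator (fun _ => (1:ℝ)) x := by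
    intro x hx
    rw [Set.indicator_of_notMem (by simp only [Set.mem_Ici, not_le]; exact hx.2)]
    have h6 : w^2/4 ≤ (x - (μ - u))^2 := by nlinarith [hx.1]
    have h7 := mul_le_mul_of_nonneg_left h6 (by linarith : (0:ℝ) ≤ 3*κ)
    linarith
  have hr2 : ∀ x ∈ Set.Ico (μ - u + r) (μ - u + e2),
      3*κ * (x - (μ - u)) ^ 2 + (-(3*κ*w^2/4))
        - (Set.Ici (μ - u + r)).indicator (fun _ => (1:ℝ)) x ≤ 0 := by
    intro x hx
    rw [Set.indicator_of_mem (Set.mem_Ici.2 hx.1)]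
    have h6 : (x - (μ - u))^2 ≤ e2^2 := by nlinarith [hx.1, hx.2]
    have h7 := mul_le_mul_of_nonneg_left h6 (by linarith : (0:ℝ) ≤ 3*κ)
    linarith
  have hr3 : ∀ x ∈ Set.Ici (μ - u + e2),
      0 ≤ 3*κ * (x - (μ - u)) ^ 2 + (-(3*κ*w^2/4))
        - (Set.Ici (μ - u + r)).indicator (fun _ => (1:ℝ)) x := by
    intro x hx
    have hx' : μ - u + e2 ≤ x := hx
    rw [Set.indicator_of_mem (Set.mem_Ici.2 (by linarith))]
    have h6 : e2^2 ≤ (x - (μ - u))^2 := by nlinarith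
    have h7 := mul_le_mul_of_nonneg_left h6 (by linarith : (0:ℝ) ≤ 3*κ)
    linarith
  have hl1 : ∀ x ∈ Set.Ioc (μ - u + w/2) (μ - u + w),
      0 ≤ 3*κ * (x - (μ - u)) ^ 2 + (-(3*κ*w^2/4))
        - (Set.Ici (μ - u + r)).indicator (fun _ => (1:ℝ)) x := by
    intro x hx
    rw [Set.indicator_of_notMem
      (by simp only [Set.mem_Ici, not_le]; linarith [hx.2])]
    have h6 : w^2/4 ≤ (x - (μ - u))^2 := by nlinarith [hx.1]
    have h7 := mul_le_mul_of_nonneg_left h6 (by linarith : (0:ℝ) ≤ 3*κ)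
    linarith
  have hl2 : ∀ x ∈ Set.Ioc (μ - u - w/2) (μ - u + w/2),
      3*κ * (x - (μ - u)) ^ 2 + (-(3*κ*w^2/4))
        - (Set.Ici (μ - u + r)).indicator (fun _ => (1:ℝ)) x ≤ 0 := by
    intro x hx
    rw [Set.indicator_of_notMem
      (by simp only [Set.mem_Ici, not_le]; linarith [hx.2])]
    have h6 : (x - (μ - u))^2 ≤ w^2/4 := by nlinarith [hx.1, hx.2]
    have h7 := mul_le_mul_of_nonneg_left h6 (by linarith : (0:ℝ) ≤ 3*κ)
    linarith
  have hl3 : ∀ x ∈ Set.Iic (μ - u - w/2),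
      0 ≤ 3*κ * (x - (μ - u)) ^ 2 + (-(3*κ*w^2/4))
        - (Set.Ici (μ - u + r)).indicator (fun _ => (1:ℝ)) x := by
    intro x hx
    have hx' : x ≤ μ - u - w/2 := hx
    rw [Set.indicator_of_notMem (by simp only [Set.mem_Ici, not_le]; linarith)]
    have h6 : w^2/4 ≤ (x - (μ - u))^2 := by nlinarith
    have h7 := mul_le_mul_of_nonneg_left h6 (by linarith : (0:ℝ) ≤ 3*κ)
    linarith
  have hΦr : 0 ≤ ∫ x in Set.Ioo (μ - u + w) (μ - u + e2),
      (3*κ * (x - (μ - u)) ^ 2 + (-(3*κ*w^2/4))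
        - (Set.Ici (μ - u + r)).indicator (fun _ => (1:ℝ)) x) := by
    rw [← integral_Ioc_eq_integral_Ioo,
      integral_phi (3*κ) (-(3*κ*w^2/4)) (μ - u) (μ - u + r) (μ - u + w) (μ - u + e2)
        (by linarith) (by linarith) (by linarith)]
    have hzero : 3*κ * ((μ - u + e2 - (μ - u)) ^ 3 - (μ - u + w - (μ - u)) ^ 3) / 3
          + (-(3*κ*w^2/4)) * (μ - u + e2 - (μ - u + w))
          - (μ - u + e2 - (μ - u + r)) = 0 := by
      linear_combination (e2 - r)*hone - κ/4*hcubic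
    linarith
  have hΦl : 0 ≤ ∫ x in Set.Ioc (μ - u - w/2) (μ - u + w),
      (3*κ * (x - (μ - u)) ^ 2 + (-(3*κ*w^2/4))
        - (Set.Ici (μ - u + r)).indicator (fun _ => (1:ℝ)) x) := by
    rw [integral_phi0 (3*κ) (-(3*κ*w^2/4)) (μ - u) (μ - u + r) (μ - u - w/2) (μ - u + w)
      (by linarith) (by linarith)]
    have hzero : 3*κ * ((μ - u + w - (μ - u)) ^ 3 - (μ - u - w/2 - (μ - u)) ^ 3) / 3
        + (-(3*κ*w^2/4)) * (μ - u + w - (μ - u - w/2)) = 0 := by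
      ring
    linarith
  have key := master law f (μ - u + w) hdens hmono hanti μ σ u hint hμ hint2 hσ
    (3*κ) (-(3*κ*w^2/4)) (μ - u + r) (μ - u + r) (μ - u + e2)
    (μ - u + w/2) (μ - u - w/2)
    (by linarith) (by linarith) (by linarith) (by linarith)
    hr1 hr2 hr3 hl1 hl2 hl3 hΦr hΦl
  have hveq : 3*κ*(σ^2 + u^2) + (-(3*κ*w^2/4)) = 3*κ*(u*r) - 3*κ*w^2/4 := by
    rw [hσur]
    ring
  linarith
lemma caseB1
    (law : Measure ℝ) [IsProbabilityMeasure law] (f : ℝ → ℝ) (m : ℝ)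
    (hdens : law = volume.withDensity (fun x => ENNReal.ofReal (f x)))
    (hmono : MonotoneOn f (Set.Iic m)) (hanti : AntitoneOn f (Set.Ici m))
    (μ σ u r : ℝ)
    (hint : Integrable (fun x => x) law) (hμ : μ = ∫ x, x ∂law)
    (hint2 : Integrable (fun x => (x - μ) ^ 2) law)
    (hσ : σ ^ 2 = ∫ x, (x - μ) ^ 2 ∂law)
    (hu : 0 < u) (hur : u < r) (hσur : σ ^ 2 + u ^ 2 = u * r)
    (hbr : 8*u ≤ 3*r) (hw0 : μ - u ≤ m) (hwr : m < μ - u + r) :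
    (law (Set.Ici (μ - u + r))).toReal ≤ 4*u/(9*r) := by
  have hr : 0 < r := lt_trans hu hur
  obtain ⟨e2, he2r, hQ⟩ := e2_exists r (m - (μ - u)) hr (by linarith) (by linarith)
  have hcore := caseB_core law f m hdens hmono hanti μ σ u r hint hμ hint2 hσ hu hur hσur
    (m - (μ - u)) e2 (4/(12*e2^2 - 3*(m - (μ - u))^2)) (by ring) (by linarith) (by linarith)
    he2r hQ rfl
  have hval := valB1 u r (m - (μ - u)) e2 (4/(12*e2^2 - 3*(m - (μ - u))^2))
    hu hur (by linarith) (by linarith) he2r hQ rfl hbr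
  linarith

lemma caseB2
    (law : Measure ℝ) [IsProbabilityMeasure law] (f : ℝ → ℝ) (m : ℝ)
    (hdens : law = volume.withDensity (fun x => ENNReal.ofReal (f x)))
    (hmono : MonotoneOn f (Set.Iic m)) (hanti : AntitoneOn f (Set.Ici m))
    (μ σ u r : ℝ)
    (hint : Integrable (fun x => x) law) (hμ : μ = ∫ x, x ∂law)
    (hint2 : Integrable (fun x => (x - μ) ^ 2) law)
    (hσ : σ ^ 2 = ∫ x, (x - μ) ^ 2 ∂law)
    (hu : 0 < u) (hur : u < r) (hσur : σ ^ 2 + u ^ 2 = u * r)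
    (hbr : 3*r ≤ 8*u) (hw0 : μ - u ≤ m) (hwr : m < μ - u + r) :
    (law (Set.Ici (μ - u + r))).toReal ≤ 4*u/(3*r) - 1/3 := by
  have hr : 0 < r := lt_trans hu hur
  obtain ⟨e2, he2r, hQ⟩ := e2_exists r (m - (μ - u)) hr (by linarith) (by linarith)
  have hcore := caseB_core law f m hdens hmono hanti μ σ u r hint hμ hint2 hσ hu hur hσur
    (m - (μ - u)) e2 (4/(12*e2^2 - 3*(m - (μ - u))^2)) (by ring) (by linarith) (by linarith)
    he2r hQ rfl
  have hval := valB2 u r (m - (μ - u)) e2 (4/(12*e2^2 - 3*(m - (μ - u))^2))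
    hu hur (by linarith) (by linarith) he2r hQ rfl hbr
  linarith

lemma diff_gen (u r : ℝ) (hu : 0 < u) (hur : u < r) :
    4*u/(3*r) - 1/3 - 4*u/(9*r) = (8*u - 3*r)/(9*r) := by
  have hr : 0 < r := lt_trans hu hur
  have hr' : r ≠ 0 := ne_of_gt hr
  field_simp
  ring

set_option maxHeartbeats 1600000 in
/-- One-sided Vysochanskii–Petunin inequality: if a real random variable has a unimodal
density `f` (nondecreasing on `(−∞, m]`, nonincreasing on `[m, ∞)`), finite mean `μ` and
finite variance `σ² > 0`, then `P(X − μ ≥ c) ≤ (4/9)·σ²/(σ² + c²)` for `c ≥ √(5/3)·σ`, and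
`P(X − μ ≥ c) ≤ (4/3)·σ²/(σ² + c²) − 1/3` for `0 < c ≤ √(5/3)·σ`. -/
theorem one_sided_vysochanskii_petunin
    (law : Measure ℝ) [IsProbabilityMeasure law] (f : ℝ → ℝ) (m : ℝ)
    (hdens : law = volume.withDensity (fun x => ENNReal.ofReal (f x)))
    (hmono : MonotoneOn f (Set.Iic m)) (hanti : AntitoneOn f (Set.Ici m))
    (hint : Integrable (fun x => x) law) (μ : ℝ) (hμ : μ = ∫ x, x ∂law)
    (hint2 : Integrable (fun x => (x - μ) ^ 2) law)
    (σ : ℝ) (hσpos : 0 < σ) (hσ : σ ^ 2 = ∫ x, (x - μ) ^ 2 ∂law) :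
    (∀ c : ℝ, Real.sqrt (5 / 3) * σ ≤ c →
      (law {x : ℝ | c ≤ x - μ}).toReal ≤ (4 / 9) * (σ ^ 2 / (σ ^ 2 + c ^ 2))) ∧
    (∀ c : ℝ, 0 < c → c ≤ Real.sqrt (5 / 3) * σ →
      (law {x : ℝ | c ≤ x - μ}).toReal ≤ (4 / 3) * (σ ^ 2 / (σ ^ 2 + c ^ 2)) - 1 / 3) := by
  have hsq : Real.sqrt (5/3) ^ 2 = 5/3 := Real.sq_sqrt (by norm_num)
  have hsqpos : 0 < Real.sqrt (5/3) := Real.sqrt_pos.2 (by norm_num)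
  have hσ2 : 0 < σ ^ 2 := by positivity
  constructor
  · -- branch 1 : c ≥ √(5/3) σ
    intro c hc1
    have hc : 0 < c := lt_of_lt_of_le (mul_pos hsqpos hσpos) hc1
    have h5 : 5 * σ ^ 2 ≤ 3 * c ^ 2 := by
      have h0 : (Real.sqrt (5/3) * σ) ^ 2 ≤ c ^ 2 :=
        pow_le_pow_left₀ (le_of_lt (mul_pos hsqpos hσpos)) hc1 2
      nlinarith [hsq, h0]
    have hu : 0 < σ ^ 2 / c := by positivity
    have hur : σ ^ 2 / c < c + σ ^ 2 / c := by linarith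
    have hσur : σ ^ 2 + (σ ^ 2 / c) ^ 2 = (σ ^ 2 / c) * (c + σ ^ 2 / c) := by
      field_simp
    have hbr : 8 * (σ ^ 2 / c) ≤ 3 * (c + σ ^ 2 / c) := by
      have h6 : 5 * (σ ^ 2 / c) * c = 5 * σ ^ 2 := by field_simp
      nlinarith [h5, hc, h6]
    have hset : {x : ℝ | c ≤ x - μ} = Set.Ici (μ - σ ^ 2 / c + (c + σ ^ 2 / c)) := by
      ext x
      simp only [Set.mem_setOf_eq, Set.mem_Ici]
      constructor <;> intro h <;> linarith
    have hB1 : 4 * (σ ^ 2 / c) / (9 * (c + σ ^ 2 / c)) = 4 / 9 * (σ ^ 2 / (σ ^ 2 + c ^ 2)) := by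
      have hne : c + σ ^ 2 / c ≠ 0 := by positivity
      field_simp
      ring
    rw [hset]
    rcases le_or_gt m (μ - σ ^ 2 / c) with hm | hm
    · have := caseA law f m hdens hmono hanti μ σ (σ ^ 2 / c) (c + σ ^ 2 / c)
        hint hμ hint2 hσ hu hur hσur hm
      linarith [hB1]
    · rcases lt_or_ge m (μ - σ ^ 2 / c + (c + σ ^ 2 / c)) with hm2 | hm2
      · have := caseB1 law f m hdens hmono hanti μ σ (σ ^ 2 / c) (c + σ ^ 2 / c)
          hint hμ hint2 hσ hu hur hσur hbr (le_of_lt hm) hm2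
        linarith [hB1]
      · have hC := caseC law f m hdens hmono hanti μ σ (σ ^ 2 / c) (c + σ ^ 2 / c)
          hint hμ hint2 hσ hu hur hσur hm2
        have hdiff := diff_gen (σ ^ 2 / c) (c + σ ^ 2 / c) hu hur
        have hnp : (8 * (σ ^ 2 / c) - 3 * (c + σ ^ 2 / c)) / (9 * (c + σ ^ 2 / c)) ≤ 0 :=
          div_nonpos_of_nonpos_of_nonneg (by linarith) (by positivity)
        linarith [hB1]
  · -- branch 2 : 0 < c ≤ √(5/3) σ
    intro c hc hc2
    have h5 : 3 * c ^ 2 ≤ 5 * σ ^ 2 := by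
      have h0 : c ^ 2 ≤ (Real.sqrt (5/3) * σ) ^ 2 := pow_le_pow_left₀ (le_of_lt hc) hc2 2
      nlinarith [hsq, h0]
    have hu : 0 < σ ^ 2 / c := by positivity
    have hur : σ ^ 2 / c < c + σ ^ 2 / c := by linarith
    have hσur : σ ^ 2 + (σ ^ 2 / c) ^ 2 = (σ ^ 2 / c) * (c + σ ^ 2 / c) := by
      field_simp
    have hbr : 3 * (c + σ ^ 2 / c) ≤ 8 * (σ ^ 2 / c) := by
      have h6 : 5 * (σ ^ 2 / c) * c = 5 * σ ^ 2 := by field_simp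
      nlinarith [h5, hc, h6]
    have hset : {x : ℝ | c ≤ x - μ} = Set.Ici (μ - σ ^ 2 / c + (c + σ ^ 2 / c)) := by
      ext x
      simp only [Set.mem_setOf_eq, Set.mem_Ici]
      constructor <;> intro h <;> linarith
    have hB2 : 4 * (σ ^ 2 / c) / (3 * (c + σ ^ 2 / c)) = 4 / 3 * (σ ^ 2 / (σ ^ 2 + c ^ 2)) := by
      have hne : c + σ ^ 2 / c ≠ 0 := by positivity
      field_simp
      ring
    rw [hset]
    rcases le_or_gt m (μ - σ ^ 2 / c) with hm | hm
    · have hA := caseA law f m hdens hmono hanti μ σ (σ ^ 2 / c) (c + σ ^ 2 / c)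
        hint hμ hint2 hσ hu hur hσur hm
      have hdiff := diff_gen (σ ^ 2 / c) (c + σ ^ 2 / c) hu hur
      have hnn : 0 ≤ (8 * (σ ^ 2 / c) - 3 * (c + σ ^ 2 / c)) / (9 * (c + σ ^ 2 / c)) :=
        div_nonneg (by linarith) (by positivity)
      linarith [hB2]
    · rcases lt_or_ge m (μ - σ ^ 2 / c + (c + σ ^ 2 / c)) with hm2 | hm2
      · have := caseB2 law f m hdens hmono hanti μ σ (σ ^ 2 / c) (c + σ ^ 2 / c)
          hint hμ hint2 hσ hu hur hσur hbr (le_of_lt hm) hm2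
        linarith [hB2]
      · have := caseC law f m hdens hmono hanti μ σ (σ ^ 2 / c) (c + σ ^ 2 / c)
          hint hμ hint2 hσ hu hur hσur hm2
        linarith [hB2]
end
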